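/- arXiv:2111.06600 — 5 statements merged into one kernel-verified Lean document; each statement's English description precedes it below -/
import Mathlib

section
/- Let n ≥ 1 be an integer and f a C² positive function on (0,∞) with f(r) ~ D rⁿ as r → 0⁺ (D > 0) solving f'' + f'/r - (n²/r²)f = f[β₁(f² - 1) + β'g²] where g is continuous and bounded. If there is a smallest r' > 0 with f(r') = 1 and f' > 0 on (0,r'), then f'(r) > 0 for all r > r'. In particular f stays above 1 after first reaching 1. -/
open Set Filter

/-- Once the vortex profile f first reaches 1, its derivative stays positive;
in particular f stays above 1 after first reaching 1. -/
theorem tcgl_profile_stays_above_one (n : ℕ) (hn : 1 ≤ n) (β₁ β' D : ℝ)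
    (hβ₁ : 0 < β₁) (hβ' : 0 < β') (hD : 0 < D)
    (g : ℝ → ℝ) (hg_cont : Continuous g) (hg_bd : ∃ M, ∀ r, |g r| ≤ M)
    (f : ℝ → ℝ) (hf_smooth : ContDiffOn ℝ 2 f (Ioi 0))
    (hf_pos : ∀ r ∈ Ioi (0:ℝ), 0 < f r)
    (hf_asym : Tendsto (fun r => f r / r ^ n) (nhdsWithin 0 (Ioi 0)) (nhds D))
    (hf_ode : ∀ r ∈ Ioi (0:ℝ),
      deriv (deriv f) r + deriv f r / r - ((n : ℝ) ^ 2 / r ^ 2) * f r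
        = f r * (β₁ * ((f r) ^ 2 - 1) + β' * (g r) ^ 2))
    (r' : ℝ) (hr' : 0 < r') (hfr' : f r' = 1)
    (hr'_first : ∀ r ∈ Ioo (0:ℝ) r', f r < 1)
    (hf'_pos : ∀ r ∈ Ioo (0:ℝ) r', 0 < deriv f r) :
    (∀ r > r', 0 < deriv f r) ∧ ∀ r > r', 1 < f r := by
  have hn1 : (1:ℝ) ≤ (n:ℝ) := by exact_mod_cast hn
  set F := deriv f with hFdef
  have hopen : IsOpen (Ioi (0:ℝ)) := isOpen_Ioi
  have hF1 : ContDiffOn ℝ 1 F (Ioi 0) :=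
    hf_smooth.deriv_of_isOpen hopen (by norm_num)
  have hFcont : ContinuousOn F (Ioi 0) := (hF1.differentiableOn one_ne_zero).continuousOn
  have hFdiff : ∀ x ∈ Ioi (0:ℝ), HasDerivAt F (deriv F x) x := fun x hx =>
    ((hF1.differentiableOn one_ne_zero).differentiableAt (hopen.mem_nhds hx)).hasDerivAt
  have hfcont : ContinuousOn f (Ioi 0) := hf_smooth.continuousOn
  have hF' : ∀ x ∈ Ioi (0:ℝ), deriv F x =
      f x * (β₁ * ((f x)^2 - 1) + β' * (g x)^2) + ((n:ℝ)^2 / x^2) * f x - F x / x := by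
    intro x hx
    have := hf_ode x hx
    linarith
  have hr'mem : r' ∈ Ioi (0:ℝ) := hr'
  -- F r' ≥ 0 by left limit
  have hFr'_nonneg : 0 ≤ F r' := by
    haveI : (nhdsWithin r' (Ioo 0 r')).NeBot := by
      apply mem_closure_iff_nhdsWithin_neBot.mp
      rw [closure_Ioo hr'.ne]
      exact ⟨hr'.le, le_rfl⟩
    have h1 : Tendsto F (nhdsWithin r' (Ioo 0 r')) (nhds (F r')) :=
      (hFcont.continuousAt (hopen.mem_nhds hr'mem)).continuousWithinAt
    exact ge_of_tendsto h1 (eventually_nhdsWithin_of_forall fun x hx => (hf'_pos x hx).le)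
  -- F > 0 just to the right of r'
  have hright : ∃ ε > 0, ∀ t ∈ Ioo r' (r' + ε), 0 < F t := by
    rcases eq_or_lt_of_le hFr'_nonneg with heq | hpos
    · -- F r' = 0, use F'' > 0 slope argument
      have hd : 0 < deriv F r' := by
        have h := hF' r' hr'mem
        rw [hfr', ← heq] at h
        have hn2 : 0 < (n:ℝ)^2 / r'^2 := div_pos (by nlinarith) (by positivity)
        have hg2 : 0 ≤ β' * (g r')^2 := mul_nonneg hβ'.le (sq_nonneg _)
        have h2 : deriv F r' = β' * (g r')^2 + (n:ℝ)^2 / r'^2 := by rw [h]; ring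
        linarith
      have htend := hasDerivAt_iff_tendsto_slope.mp (hFdiff r' hr'mem)
      have hev : ∀ᶠ x in nhdsWithin r' {r'}ᶜ, 0 < slope F r' x :=
        htend (Ioi_mem_nhds hd)
      rw [eventually_nhdsWithin_iff, Metric.eventually_nhds_iff] at hev
      obtain ⟨ε, hε, hball⟩ := hev
      refine ⟨ε, hε, fun t ht => ?_⟩
      have hne : t ∈ ({r'}ᶜ : Set ℝ) := by
        simp only [mem_compl_iff, mem_singleton_iff]
        exact (ne_of_gt ht.1)
      have hdist : dist t r' < ε := by
        rw [Real.dist_eq, abs_of_pos (by linarith [ht.1] : (0:ℝ) < t - r')]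
        linarith [ht.2]
      have hsl := hball hdist hne
      rw [slope_def_field, ← heq] at hsl
      have htr : 0 < t - r' := by linarith [ht.1]
      have : 0 < (F t - 0) := by
        by_contra hle
        push_neg at hle
        have : (F t - 0) / (t - r') ≤ 0 := div_nonpos_of_nonpos_of_nonneg hle htr.le
        linarith
      linarith
    · -- F r' > 0, continuity
      have hc : ContinuousAt F r' := hFcont.continuousAt (hopen.mem_nhds hr'mem)
      have hev : ∀ᶠ x in nhds r', 0 < F x := hc (Ioi_mem_nhds hpos)
      rw [Metric.eventually_nhds_iff] at hev
      obtain ⟨ε, hε, hball⟩ := hev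
      refine ⟨ε, hε, fun t ht => ?_⟩
      apply hball
      rw [Real.dist_eq, abs_of_pos (by linarith [ht.1] : (0:ℝ) < t - r')]
      linarith [ht.2]
  obtain ⟨ε, hε, hεpos⟩ := hright
  have key : ∀ r > r', 0 < F r := by
    by_contra hcon
    push_neg at hcon
    obtain ⟨b, hb, hFb⟩ := hcon
    set B : Set ℝ := {r | r' < r ∧ F r ≤ 0} with hBdef
    have hBne : B.Nonempty := ⟨b, hb, hFb⟩
    have hBbd : BddBelow B := ⟨r', fun x hx => hx.1.le⟩
    set s := sInf B with hsdef
    have hlb : ∀ x ∈ B, r' + ε ≤ x := by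
      intro x hx
      by_contra hlt
      push_neg at hlt
      exact (hεpos x ⟨hx.1, hlt⟩).not_ge hx.2
    have hs_ge : r' + ε ≤ s := le_csInf hBne hlb
    have hsr' : r' < s := by linarith
    have hs0 : s ∈ Ioi (0:ℝ) := lt_trans hr' hsr'
    have hpos_mid : ∀ t ∈ Ioo r' s, 0 < F t := by
      intro t ht
      by_contra h
      push_neg at h
      exact absurd (csInf_le hBbd ⟨ht.1, h⟩) (not_le.mpr ht.2)
    haveI hNB : (nhdsWithin s (Ioo r' s)).NeBot := by
      apply mem_closure_iff_nhdsWithin_neBot.mp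
      rw [closure_Ioo hsr'.ne]
      exact ⟨hsr'.le, le_rfl⟩
    have hcs : Tendsto F (nhdsWithin s (Ioo r' s)) (nhds (F s)) :=
      (hFcont.continuousAt (hopen.mem_nhds hs0)).continuousWithinAt
    have hFs_ge : 0 ≤ F s :=
      ge_of_tendsto hcs (eventually_nhdsWithin_of_forall fun x hx => (hpos_mid x hx).le)
    have hFs_le : F s ≤ 0 := by
      have hcls : s ∈ closure B := (isGLB_csInf hBne hBbd).mem_closure hBne
      haveI : (nhdsWithin s B).NeBot := mem_closure_iff_nhdsWithin_neBot.mp hcls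
      have hcsB : Tendsto F (nhdsWithin s B) (nhds (F s)) :=
        (hFcont.continuousAt (hopen.mem_nhds hs0)).continuousWithinAt
      exact le_of_tendsto hcsB (eventually_nhdsWithin_of_forall fun x hx => hx.2)
    have hFs : F s = 0 := le_antisymm hFs_le hFs_ge
    have hmono : StrictMonoOn f (Icc r' s) := by
      apply strictMonoOn_of_deriv_pos (convex_Icc r' s)
      · exact hfcont.mono fun x hx => lt_of_lt_of_le hr' hx.1
      · intro x hx
        rw [interior_Icc] at hx
        exact hpos_mid x hx
    have hfs1 : 1 < f s := by
      have := hmono (left_mem_Icc.mpr hsr'.le) (right_mem_Icc.mpr hsr'.le) hsr'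
      rwa [hfr'] at this
    have hfs0 : 0 < f s := hf_pos s hs0
    have hdF : 0 < deriv F s := by
      have h := hF' s hs0
      rw [hFs] at h
      have hs0' : (0:ℝ) < s := hs0
      have hn2 : 0 < (n:ℝ)^2 / s^2 := div_pos (by nlinarith) (pow_pos hs0' 2)
      have h1 : 0 < f s * (β₁ * ((f s)^2 - 1) + β' * (g s)^2) := by
        apply mul_pos hfs0
        have : 0 < (f s)^2 - 1 := by nlinarith
        nlinarith [sq_nonneg (g s)]
      have h2 : 0 < (n:ℝ)^2 / s^2 * f s := mul_pos hn2 hfs0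
      rw [h]
      simp only [zero_div]
      linarith
    have htend := hasDerivAt_iff_tendsto_slope.mp (hFdiff s hs0)
    have hev : ∀ᶠ x in nhdsWithin s {s}ᶜ, 0 < slope F s x := htend (Ioi_mem_nhds hdF)
    have hle : nhdsWithin s (Ioo r' s) ≤ nhdsWithin s {s}ᶜ :=
      nhdsWithin_mono s fun x hx => by
        simp only [mem_compl_iff, mem_singleton_iff]
        exact ne_of_lt hx.2
    have hev2 : ∀ᶠ x in nhdsWithin s (Ioo r' s), 0 < slope F s x := hev.filter_mono hle
    obtain ⟨x, hsl, hx⟩ := (hev2.and eventually_mem_nhdsWithin).exists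
    have hneg : slope F s x < 0 := by
      rw [slope_def_field, hFs]
      have hxs : x - s < 0 := by linarith [hx.2]
      exact div_neg_of_pos_of_neg (by simpa using hpos_mid x hx) hxs
    linarith
  refine ⟨key, fun r hrr => ?_⟩
  have hmono : StrictMonoOn f (Icc r' r) := by
    apply strictMonoOn_of_deriv_pos (convex_Icc r' r)
    · exact hfcont.mono fun x hx => lt_of_lt_of_le hr' hx.1
    · intro x hx
      rw [interior_Icc] at hx
      exact key x hx.1
  have := hmono (left_mem_Icc.mpr hrr.le) (right_mem_Icc.mpr hrr.le) hrr
  rwa [hfr'] at this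
end

section
/- Let m ≥ 1, and suppose g is continuous on [0,δ], solves the integral equation g(r) = C rᵐ + (1/(2m)) ∫₀^r (rᵐ/s^{m-1} - s^{m+1}/rᵐ) g(s)(β₂g(s)² - α + β'f(s)²) ds on [0,δ], and satisfies |g(s)/sᵐ| ≤ M and |β₂g(s)² - α + β'f(s)²| ≤ M̂ for s ∈ [0,δ]. Then |g(r) - C rᵐ| ≤ (M M̂)/(4m) r^{m+2} for all r ∈ [0,δ]. -/
open Set intervalIntegral

/-- Local growth estimate (Step 6 of Lemma 4.1): |g(r) - C rᵐ| ≤ (M M̂)/(4m) r^{m+2}. -/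
theorem tcgl_local_growth_estimate (m : ℕ) (hm : 1 ≤ m) (β₂ α β' C M Mhat δ : ℝ)
    (hδ : 0 < δ) (hM : 0 ≤ M) (hMhat : 0 ≤ Mhat)
    (f g : ℝ → ℝ) (hg_cont : ContinuousOn g (Icc 0 δ))
    (hint : ∀ r ∈ Icc (0:ℝ) δ,
      g r = C * r ^ m + (1 / (2 * (m : ℝ))) *
        ∫ s in (0:ℝ)..r, (r ^ m / s ^ (m - 1) - s ^ (m + 1) / r ^ m) *
          g s * (β₂ * (g s) ^ 2 - α + β' * (f s) ^ 2))
    (hgM : ∀ s ∈ Ioc (0:ℝ) δ, |g s / s ^ m| ≤ M)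
    (hMhat' : ∀ s ∈ Icc (0:ℝ) δ, |β₂ * (g s) ^ 2 - α + β' * (f s) ^ 2| ≤ Mhat) :
    ∀ r ∈ Icc (0:ℝ) δ, |g r - C * r ^ m| ≤ M * Mhat / (4 * (m : ℝ)) * r ^ (m + 2) := by
  intro r hr
  obtain ⟨hr0, hrδ⟩ := hr
  have hm0 : (0:ℝ) < (m:ℝ) := by exact_mod_cast hm
  rw [hint r ⟨hr0, hrδ⟩, add_sub_cancel_left, abs_mul]
  have key : ‖∫ s in (0:ℝ)..r, (r ^ m / s ^ (m - 1) - s ^ (m + 1) / r ^ m) *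
      g s * (β₂ * (g s) ^ 2 - α + β' * (f s) ^ 2)‖ ≤
      |∫ s in (0:ℝ)..r, M * Mhat * r ^ m * s| := by
    apply intervalIntegral.norm_integral_le_abs_of_norm_le
    · filter_upwards [MeasureTheory.ae_restrict_mem measurableSet_uIoc] with t ht
      rw [Set.uIoc_of_le hr0] at ht
      have htpos : 0 < t := ht.1
      have hrpos : 0 < r := lt_of_lt_of_le htpos ht.2
      have hgb : |g t / t ^ m| ≤ M := hgM t ⟨htpos, ht.2.trans hrδ⟩
      have hhb : |β₂ * (g t) ^ 2 - α + β' * (f t) ^ 2| ≤ Mhat :=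
        hMhat' t ⟨htpos.le, ht.2.trans hrδ⟩
      have heq : (r ^ m / t ^ (m - 1) - t ^ (m + 1) / r ^ m) * g t
          = (g t / t ^ m) * (r ^ m * t - t ^ (2 * m + 1) / r ^ m) := by
        obtain ⟨k, rfl⟩ : ∃ k, m = k + 1 := ⟨m - 1, (Nat.succ_pred_eq_of_pos hm).symm⟩
        simp only [Nat.add_sub_cancel]
        field_simp
        ring
      have h2 : |r ^ m * t - t ^ (2 * m + 1) / r ^ m| ≤ r ^ m * t := by
        rw [abs_of_nonneg]
        · have : 0 ≤ t ^ (2 * m + 1) / r ^ m := by positivity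
          linarith
        · rw [sub_nonneg, div_le_iff₀ (by positivity)]
          calc t ^ (2 * m + 1) = t ^ (2 * m) * t := by ring
            _ ≤ r ^ (2 * m) * t := by
                have := pow_le_pow_left₀ htpos.le ht.2 (2 * m)
                nlinarith
            _ = r ^ m * t * r ^ m := by ring
      have hker : |(r ^ m / t ^ (m - 1) - t ^ (m + 1) / r ^ m) * g t| ≤ M * (r ^ m * t) := by
        rw [heq, abs_mul]
        exact mul_le_mul hgb h2 (abs_nonneg _) hM
      calc ‖(r ^ m / t ^ (m - 1) - t ^ (m + 1) / r ^ m) * g t *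
              (β₂ * (g t) ^ 2 - α + β' * (f t) ^ 2)‖
          = |(r ^ m / t ^ (m - 1) - t ^ (m + 1) / r ^ m) * g t| *
              |β₂ * (g t) ^ 2 - α + β' * (f t) ^ 2| := abs_mul _ _
        _ ≤ M * (r ^ m * t) * Mhat :=
            mul_le_mul hker hhb (abs_nonneg _) (by positivity)
        _ = M * Mhat * r ^ m * t := by ring
    · exact (Continuous.intervalIntegrable (by continuity) 0 r)
  have hval : ∫ s in (0:ℝ)..r, M * Mhat * r ^ m * s = M * Mhat * r ^ m * (r ^ 2 / 2) := by
    rw [intervalIntegral.integral_const_mul, integral_id]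
    ring
  rw [hval, Real.norm_eq_abs] at key
  have habs : |1 / (2 * (m:ℝ))| = 1 / (2 * (m:ℝ)) := abs_of_pos (by positivity)
  rw [habs]
  calc 1 / (2 * (m:ℝ)) * |∫ s in (0:ℝ)..r, (r ^ m / s ^ (m - 1) - s ^ (m + 1) / r ^ m) *
          g s * (β₂ * (g s) ^ 2 - α + β' * (f s) ^ 2)|
      ≤ 1 / (2 * (m:ℝ)) * |M * Mhat * r ^ m * (r ^ 2 / 2)| := by
        exact mul_le_mul_of_nonneg_left key (by positivity)
    _ = M * Mhat / (4 * (m:ℝ)) * r ^ (m + 2) := by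
        rw [abs_of_nonneg (by positivity)]
        rw [pow_add]
        field_simp
        ring
end

section
/- Let (f, g) be a C² solution pair on (0,∞) of f'' + f'/r - (n²/r²)f = ∂V/∂f·(1/2) and g'' + g'/r - (m²/r²)g = ∂V/∂g·(1/2) (the radial two-component Ginzburg–Landau equations), with f(∞) = A, g(∞) = B, f(r) = A + O(r⁻²), g(r) = B + O(r⁻²), r²f'(r)² → 0 and r²g'(r)² → 0 as r → ∞, and f(0)·n = 0, g(0)·m = 0, rf'(r)² → 0, rg'(r)² → 0 as r → 0. Then the Pohozaev-type identity holds: ∫₀^∞ r (V(f(r),g(r)) - V(A,B)) dr = (n²A² + m²B²)/2, where V(f,g) = (β₁/2)(f²-1)² + (β₂/2)g⁴ + β'f²g² - αg². -/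
open Set Filter MeasureTheory

/- ===== auxiliary lemmas ===== -/

lemma log_blowup {u u' : ℝ → ℝ} {c δ : ℝ} (hc : 0 < c) (hδ : 0 < δ)
    (hderiv : ∀ r ∈ Ioo (0:ℝ) δ, HasDerivAt u (u' r) r)
    (hlow : ∀ r ∈ Ioo (0:ℝ) δ, c / r ≤ u' r)
    (hu0 : Tendsto u (nhdsWithin 0 (Ioi 0)) (nhds 0)) : False := by
  set v : ℝ → ℝ := fun r => u r - c * Real.log r with hv
  have hvd : ∀ r ∈ Ioo (0:ℝ) δ, HasDerivAt v (u' r - c / r) r := by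
    intro r hr
    exact (hderiv r hr).sub (((Real.hasDerivAt_log (ne_of_gt hr.1)).const_mul c))
  have hmono : MonotoneOn v (Ioo 0 δ) := by
    apply monotoneOn_of_deriv_nonneg (convex_Ioo 0 δ)
    · intro r hr; exact ((hvd r hr).continuousAt).continuousWithinAt
    · intro r hr
      rw [interior_Ioo] at hr
      exact ((hvd r hr).differentiableAt).differentiableWithinAt
    · intro r hr
      rw [interior_Ioo] at hr
      rw [(hvd r hr).deriv]
      exact sub_nonneg.2 (hlow r hr)
  set b := δ / 2 with hb
  have hbmem : b ∈ Ioo (0:ℝ) δ := ⟨by positivity, by simp [hb]; linarith⟩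
  have hle : ∀ a ∈ Ioo (0:ℝ) b, u a ≤ (u b - c * Real.log b) + c * Real.log a := by
    intro a ha
    have : v a ≤ v b := hmono ⟨ha.1, lt_trans ha.2 hbmem.2⟩ hbmem (le_of_lt ha.2)
    simp only [hv] at this
    linarith
  have htb : Tendsto (fun a => (u b - c * Real.log b) + c * Real.log a)
      (nhdsWithin 0 (Ioi 0)) atBot := by
    apply Filter.tendsto_atBot_add_const_left
    exact (Real.tendsto_log_nhdsGT_zero.const_mul_atBot hc)
  have hub : Tendsto u (nhdsWithin 0 (Ioi 0)) atBot := by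
    apply tendsto_atBot_mono' _ _ htb
    filter_upwards [Ioo_mem_nhdsGT_of_mem ⟨le_refl (0:ℝ), hbmem.1⟩] with a ha
    exact hle a ha
  exact (not_tendsto_atBot_of_tendsto_nhds hu0) hub

lemma quad_blowup {u u' : ℝ → ℝ} {c R : ℝ} (hc : 0 < c)
    (hderiv : ∀ r ∈ Ioi R, HasDerivAt u (u' r) r)
    (hlow : ∀ r ∈ Ioi R, c * r ≤ u' r)
    (hu : Tendsto (fun r => (u r)^2) atTop (nhds 0)) : False := by
  set R₀ := max R 0 + 1 with hR₀
  have hR₀R : R < R₀ := by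
    have := le_max_left R 0; linarith
  set v : ℝ → ℝ := fun r => u r - c * r ^ 2 / 2 with hv
  have hvd : ∀ r ∈ Ioi R, HasDerivAt v (u' r - c * r) r := by
    intro r hr
    have h2 : HasDerivAt (fun r : ℝ => c * r ^ 2 / 2) (c * r) r := by
      have := ((hasDerivAt_pow 2 r).const_mul c).div_const 2
      refine this.congr_deriv ?_; ring
    exact (hderiv r hr).sub h2
  have hmono : MonotoneOn v (Ioi R) := by
    apply monotoneOn_of_deriv_nonneg (convex_Ioi R)
    · intro r hr; exact ((hvd r hr).continuousAt).continuousWithinAt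
    · intro r hr; rw [interior_Ioi] at hr
      exact ((hvd r hr).differentiableAt).differentiableWithinAt
    · intro r hr; rw [interior_Ioi] at hr
      rw [(hvd r hr).deriv]; exact sub_nonneg.2 (hlow r hr)
  have hgrow : ∀ r ∈ Ici R₀, (u R₀ - c * R₀ ^ 2 / 2) + c * r ^ 2 / 2 ≤ u r := by
    intro r hr
    have := hmono (mem_Ioi.2 hR₀R) (mem_Ioi.2 (lt_of_lt_of_le hR₀R hr)) hr
    simp only [hv] at this; linarith
  have htop : Tendsto u atTop atTop := by
    apply tendsto_atTop_mono' _ _ ?_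
    · exact fun r => (u R₀ - c * R₀ ^ 2 / 2) + c * r ^ 2 / 2
    · filter_upwards [Ici_mem_atTop R₀] with r hr using hgrow r hr
    · apply tendsto_atTop_add_const_left
      apply Tendsto.atTop_div_const (by norm_num)
      exact (tendsto_pow_atTop (by norm_num)).const_mul_atTop hc
  have : Tendsto (fun r => (u r)^2) atTop atTop :=
    (tendsto_pow_atTop (by norm_num)).comp htop
  exact (not_tendsto_atTop_of_tendsto_nhds hu) this

lemma lim_at_zero {φ : ℝ → ℝ}
    (hd : ∀ r ∈ Ioi (0:ℝ), HasDerivAt φ (deriv φ r) r)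
    (h0 : Tendsto (fun r => r * (deriv φ r)^2) (nhdsWithin 0 (Ioi 0)) (nhds 0)) :
    ∃ L, Tendsto φ (nhdsWithin 0 (Ioi 0)) (nhds L) := by
  have hev : ∀ᶠ r in nhdsWithin (0:ℝ) (Ioi 0), r * (deriv φ r)^2 < 1 := by
    have := h0 (Iio_mem_nhds (by norm_num : (0:ℝ) < 1))
    filter_upwards [this] with r hr using hr
  obtain ⟨δ', hδ'⟩ := mem_nhdsGT_iff_exists_Ioo_subset.1 hev
  obtain ⟨hδ'pos, hsub⟩ := hδ'
  have hδpos : (0:ℝ) < δ' := hδ'pos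
  have hbound : ∀ r ∈ Ioo (0:ℝ) δ', |deriv φ r| ≤ (Real.sqrt r)⁻¹ := by
    intro r hr
    have h1 : r * (deriv φ r)^2 < 1 := hsub hr
    have hrpos : 0 < r := hr.1
    have h2 : (deriv φ r)^2 ≤ r⁻¹ := by
      rw [inv_eq_one_div, le_div_iff₀ hrpos]; nlinarith
    calc |deriv φ r| = Real.sqrt ((deriv φ r)^2) := (Real.sqrt_sq_eq_abs _).symm
      _ ≤ Real.sqrt r⁻¹ := Real.sqrt_le_sqrt h2
      _ = (Real.sqrt r)⁻¹ := Real.sqrt_inv r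
  have hsqrt : ∀ r ∈ Ioo (0:ℝ) δ', HasDerivAt (fun s => 2 * Real.sqrt s) (Real.sqrt r)⁻¹ r := by
    intro r hr
    have hne : Real.sqrt r ≠ 0 := ne_of_gt (Real.sqrt_pos.2 hr.1)
    have h := (Real.hasDerivAt_sqrt (ne_of_gt hr.1)).const_mul 2
    have heq : 2 * (1 / (2 * Real.sqrt r)) = (Real.sqrt r)⁻¹ := by field_simp
    rw [heq] at h; exact h
  have hm : ∀ (s : ℝ), s = 1 ∨ s = -1 →
      MonotoneOn (fun r => 2 * Real.sqrt r + s * φ r) (Ioo 0 δ') := by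
    intro s hs
    apply monotoneOn_of_deriv_nonneg (convex_Ioo 0 δ')
    · intro r hr
      exact (((hsqrt r hr).add (((hd r hr.1).const_mul s))).continuousAt).continuousWithinAt
    · intro r hr; rw [interior_Ioo] at hr
      exact (((hsqrt r hr).add
        (((hd r hr.1).const_mul s))).differentiableAt).differentiableWithinAt
    · intro r hr; rw [interior_Ioo] at hr
      rw [((hsqrt r hr).fun_add (((hd r hr.1).const_mul s))).deriv]
      have := hbound r hr
      rcases hs with h | h <;> rw [h] <;> rcases abs_le.1 this with ⟨h1, h2⟩ <;> nlinarith
  have hmn := hm (-1) (Or.inr rfl)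
  have hmp := hm 1 (Or.inl rfl)
  set b := δ'/2 with hb
  have hbmem : b ∈ Ioo (0:ℝ) δ' := ⟨by positivity, by simp only [hb]; linarith⟩
  have hbdd : BddBelow ((fun r => 2 * Real.sqrt r + (-1) * φ r) '' Ioo 0 b) := by
    refine ⟨-(2 * Real.sqrt b + 1 * φ b), ?_⟩
    rintro x ⟨r, hr, rfl⟩
    have hrm : r ∈ Ioo (0:ℝ) δ' := ⟨hr.1, lt_trans hr.2 hbmem.2⟩
    have h1 : 2 * Real.sqrt r + 1 * φ r ≤ 2 * Real.sqrt b + 1 * φ b :=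
      hmp hrm hbmem (le_of_lt hr.2)
    have h2 : 0 ≤ Real.sqrt r := Real.sqrt_nonneg r
    simp only [mem_lowerBounds]
    nlinarith
  have hne : (Ioo (0:ℝ) b).Nonempty := ⟨b/2, by constructor <;> [positivity; linarith [hbmem.1]]⟩
  have hmono' : MonotoneOn (fun r => 2 * Real.sqrt r + (-1) * φ r) (Ioo 0 b) :=
    hmn.mono (Ioo_subset_Ioo le_rfl (le_of_lt hbmem.2))
  have hten := MonotoneOn.tendsto_nhdsWithin_Ioo_right hne hmono' hbdd
  set S := sInf ((fun r => 2 * Real.sqrt r + (-1) * φ r) '' Ioo 0 b) with hS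
  refine ⟨-S, ?_⟩
  have hsq0 : Tendsto (fun r : ℝ => 2 * Real.sqrt r) (nhdsWithin 0 (Ioi 0)) (nhds 0) := by
    have : Tendsto (fun r : ℝ => 2 * Real.sqrt r) (nhds 0) (nhds (2 * Real.sqrt 0)) :=
      (continuous_const.mul Real.continuous_sqrt).continuousAt
    simpa using this.mono_left nhdsWithin_le_nhds
  have : Tendsto (fun r => 2 * Real.sqrt r - (2 * Real.sqrt r + (-1) * φ r))
      (nhdsWithin 0 (Ioi 0)) (nhds (0 - S)) := hsq0.sub hten
  simp only [zero_sub] at this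
  convert this using 2 with r
  ring

lemma aux_top_not_pos {φ ψ : ℝ → ℝ} {k A c : ℝ}
    (hd2 : ∀ r ∈ Ioi (0:ℝ), HasDerivAt (deriv φ) (deriv (deriv φ) r) r)
    (hode : ∀ r ∈ Ioi (0:ℝ), deriv φ r + r * deriv (deriv φ) r = k * φ r / r + r * ψ r)
    (hφ : Tendsto φ atTop (nhds A)) (hψ : Tendsto ψ atTop (nhds c))
    (htop : Tendsto (fun r => r^2*(deriv φ r)^2) atTop (nhds 0)) : ¬ 0 < c := by
  intro hc
  set u : ℝ → ℝ := fun r => r * deriv φ r with hu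
  have hud : ∀ r ∈ Ioi (0:ℝ), HasDerivAt u (deriv φ r + r * deriv (deriv φ) r) r := by
    intro r hr
    have := (hasDerivAt_id r).fun_mul (hd2 r hr)
    simpa [hu] using this
  have husq : Tendsto (fun r => (u r)^2) atTop (nhds 0) := by
    have : (fun r => r^2*(deriv φ r)^2) = fun r => (u r)^2 := by
      funext r; simp [hu]; ring
    rwa [this] at htop
  have h1 : Tendsto (fun r => k * φ r / r) atTop (nhds 0) :=
    Tendsto.div_atTop (hφ.const_mul k) tendsto_id
  have e1 : ∀ᶠ r in atTop, -1 < k * φ r / r := h1.eventually_const_lt (by norm_num)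
  have e2 : ∀ᶠ r in atTop, c/2 < ψ r := hψ.eventually_const_lt (by linarith)
  have e3 : ∀ᶠ r in atTop, (4/c : ℝ) ≤ r := eventually_ge_atTop _
  have e4 : ∀ᶠ r in atTop, (0:ℝ) < r := eventually_gt_atTop 0
  obtain ⟨R, hR⟩ := (((e1.and e2).and e3).and e4).exists_forall_of_atTop
  apply quad_blowup (c := c/4) (R := R) (by linarith)
      (fun r hr => hud r (hR r (le_of_lt hr)).2)
  · intro r hr
    obtain ⟨⟨⟨p1, p2⟩, p3⟩, p4⟩ := hR r (le_of_lt hr)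
    rw [hode r p4]
    have : c/4 * r + 1 ≤ r * (c/2) := by
      have hr4 : 4/c ≤ r := p3
      have : 4 ≤ c * r := by
        rw [div_le_iff₀ (by linarith)] at hr4; linarith
      nlinarith
    nlinarith
  · exact husq

lemma aux_zero_not_pos {φ ψ : ℝ → ℝ} {k w L : ℝ} (hk : 0 < k)
    (hd2 : ∀ r ∈ Ioi (0:ℝ), HasDerivAt (deriv φ) (deriv (deriv φ) r) r)
    (hode : ∀ r ∈ Ioi (0:ℝ), deriv φ r + r * deriv (deriv φ) r = k * φ r / r + r * ψ r)
    (hL : Tendsto φ (nhdsWithin 0 (Ioi 0)) (nhds L))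
    (hψ : Tendsto ψ (nhdsWithin 0 (Ioi 0)) (nhds w))
    (h0 : Tendsto (fun r => r * (deriv φ r)^2) (nhdsWithin 0 (Ioi 0)) (nhds 0)) :
    ¬ 0 < L := by
  intro hLpos
  set u : ℝ → ℝ := fun r => r * deriv φ r with hu
  have hud : ∀ r ∈ Ioi (0:ℝ), HasDerivAt u (deriv φ r + r * deriv (deriv φ) r) r := by
    intro r hr
    simpa [hu] using (hasDerivAt_id r).fun_mul (hd2 r hr)
  have htid : Tendsto (fun r : ℝ => r) (nhdsWithin 0 (Ioi 0)) (nhds 0) :=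
    (continuous_id.tendsto 0).mono_left nhdsWithin_le_nhds
  have hu0 : Tendsto u (nhdsWithin 0 (Ioi 0)) (nhds 0) := by
    rw [tendsto_zero_iff_abs_tendsto_zero]
    have hsq : Tendsto (fun r => (u r)^2) (nhdsWithin 0 (Ioi 0)) (nhds 0) := by
      have h' := htid.mul h0
      simp only [mul_zero] at h'
      have : (fun r => r * (r * (deriv φ r)^2)) = fun r => (u r)^2 := by
        funext r; simp [hu]; ring
      rwa [this] at h'
    have h2 := (Real.continuous_sqrt.tendsto 0).comp hsq
    simp only [Real.sqrt_zero] at h2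
    refine h2.congr fun r => ?_
    simp [Function.comp, Real.sqrt_sq_eq_abs]
  set Wb := |w| + 1 with hWb
  have hWbpos : 0 < Wb := by positivity
  set c := k * L / 4 with hc
  have hcpos : 0 < c := by positivity
  have e1 : ∀ᶠ r in nhdsWithin (0:ℝ) (Ioi 0), L/2 < φ r := hL.eventually_const_lt (by linarith)
  have e2 : ∀ᶠ r in nhdsWithin (0:ℝ) (Ioi 0), |ψ r| < Wb := by
    have habs : Tendsto (fun r => |ψ r|) (nhdsWithin 0 (Ioi 0)) (nhds |w|) :=
      (continuous_abs.tendsto w).comp hψ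
    exact habs.eventually_lt_const (by simp [hWb])
  have e3 : ∀ᶠ r in nhdsWithin (0:ℝ) (Ioi 0), r^2 < c / Wb := by
    have hsq : Tendsto (fun r : ℝ => r^2) (nhdsWithin 0 (Ioi 0)) (nhds 0) := by
      have h3 := htid.mul htid
      simp only [mul_zero] at h3
      exact h3.congr fun r => (pow_two r).symm
    exact hsq.eventually_lt_const (by positivity)
  obtain ⟨δ, hδpos, hδ⟩ := mem_nhdsGT_iff_exists_Ioo_subset.1 ((e1.and e2).and e3)
  have hδpos' : (0:ℝ) < δ := hδpos
  apply log_blowup hcpos hδpos' (fun r hr => hud r hr.1) _ hu0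
  intro r hr
  obtain ⟨⟨p1, p2⟩, p3⟩ := hδ hr
  have hrpos : 0 < r := hr.1
  rw [hode r hrpos]
  have key : k * φ r / r + r * ψ r - c / r = (k * φ r - c + r^2 * ψ r) / r := by
    field_simp; ring
  have hnum : 0 ≤ k * φ r - c + r^2 * ψ r := by
    have b1 : k * (L/2) ≤ k * φ r := by nlinarith
    have b2 : -(r^2 * Wb) ≤ r^2 * ψ r := by nlinarith [abs_le.1 (le_of_lt p2), sq_nonneg r]
    have b3 : r^2 * Wb < c := by
      have := mul_lt_mul_of_pos_right p3 hWbpos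
      rwa [div_mul_cancel₀ _ (ne_of_gt hWbpos)] at this
    nlinarith
  linarith [div_nonneg hnum (le_of_lt hrpos), key]

section wrappers
variable {φ ψ : ℝ → ℝ} {k : ℝ}

lemma neg_system_d2 (hd2 : ∀ r ∈ Ioi (0:ℝ), HasDerivAt (deriv φ) (deriv (deriv φ) r) r) :
    ∀ r ∈ Ioi (0:ℝ), HasDerivAt (deriv (fun s => -φ s)) (deriv (deriv (fun s => -φ s)) r) r := by
  have hdneg : deriv (fun s => -φ s) = fun s => -deriv φ s := funext fun s => deriv.neg
  intro r hr
  rw [hdneg]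
  have e : deriv (fun s => -deriv φ s) r = -deriv (deriv φ) r := deriv.neg
  rw [e]
  exact (hd2 r hr).neg

lemma neg_system_ode
    (hode : ∀ r ∈ Ioi (0:ℝ), deriv φ r + r * deriv (deriv φ) r = k * φ r / r + r * ψ r) :
    ∀ r ∈ Ioi (0:ℝ), deriv (fun s => -φ s) r + r * deriv (deriv (fun s => -φ s)) r
      = k * (-φ r) / r + r * (-ψ r) := by
  have hdneg : deriv (fun s => -φ s) = fun s => -deriv φ s := funext fun s => deriv.neg
  intro r hr
  rw [hdneg]
  show -deriv φ r + r * deriv (fun s => -deriv φ s) r = _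
  have e : deriv (fun s => -deriv φ s) r = -deriv (deriv φ) r := deriv.neg
  rw [e]
  linear_combination (-1 : ℝ) * hode r hr

lemma neg_system_sq_top (htop : Tendsto (fun r => r^2*(deriv φ r)^2) atTop (nhds 0)) :
    Tendsto (fun r => r^2*(deriv (fun s => -φ s) r)^2) atTop (nhds 0) := by
  have hdneg : deriv (fun s => -φ s) = fun s => -deriv φ s := funext fun s => deriv.neg
  simpa [hdneg, neg_sq] using htop

lemma neg_system_sq_zero
    (h0 : Tendsto (fun r => r*(deriv φ r)^2) (nhdsWithin 0 (Ioi 0)) (nhds 0)) :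
    Tendsto (fun r => r*(deriv (fun s => -φ s) r)^2) (nhdsWithin 0 (Ioi 0)) (nhds 0) := by
  have hdneg : deriv (fun s => -φ s) = fun s => -deriv φ s := funext fun s => deriv.neg
  simpa [hdneg, neg_sq] using h0

lemma forced_crit_at_top {A c : ℝ} (hk : 0 ≤ k)
    (hd2 : ∀ r ∈ Ioi (0:ℝ), HasDerivAt (deriv φ) (deriv (deriv φ) r) r)
    (hode : ∀ r ∈ Ioi (0:ℝ), deriv φ r + r * deriv (deriv φ) r = k * φ r / r + r * ψ r)
    (hφ : Tendsto φ atTop (nhds A)) (hψ : Tendsto ψ atTop (nhds c))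
    (htop : Tendsto (fun r => r ^ 2 * (deriv φ r) ^ 2) atTop (nhds 0)) : c = 0 := by
  have h1 := aux_top_not_pos hd2 hode hφ hψ htop
  have h2 := aux_top_not_pos (φ := fun s => -φ s) (ψ := fun s => -ψ s)
    (neg_system_d2 hd2) (neg_system_ode hode) hφ.neg hψ.neg (neg_system_sq_top htop)
  simp only [not_lt] at h1 h2
  linarith

lemma forced_zero_at_zero {w L : ℝ} (hk : 0 < k)
    (hd2 : ∀ r ∈ Ioi (0:ℝ), HasDerivAt (deriv φ) (deriv (deriv φ) r) r)
    (hode : ∀ r ∈ Ioi (0:ℝ), deriv φ r + r * deriv (deriv φ) r = k * φ r / r + r * ψ r)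
    (hL : Tendsto φ (nhdsWithin 0 (Ioi 0)) (nhds L))
    (hψ : Tendsto ψ (nhdsWithin 0 (Ioi 0)) (nhds w))
    (h0 : Tendsto (fun r => r * (deriv φ r) ^ 2) (nhdsWithin 0 (Ioi 0)) (nhds 0)) :
    L = 0 := by
  have h1 := aux_zero_not_pos hk hd2 hode hL hψ h0
  have h2 := aux_zero_not_pos (φ := fun s => -φ s) (ψ := fun s => -ψ s) hk
    (neg_system_d2 hd2) (neg_system_ode hode) hL.neg hψ.neg (neg_system_sq_zero h0)
  simp only [not_lt] at h1 h2
  linarith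
end wrappers

noncomputable def Vpoly (β₁ β₂ β' α : ℝ) (x y : ℝ) : ℝ :=
  β₁ / 2 * (x ^ 2 - 1) ^ 2 + β₂ / 2 * y ^ 4 + β' * x ^ 2 * y ^ 2 - α * y ^ 2

noncomputable def Phi (n m : ℕ) (β₁ β₂ β' α A B : ℝ) (f g : ℝ → ℝ) (r : ℝ) : ℝ :=
  (r ^ 2 * ((deriv f r) ^ 2 + (deriv g r) ^ 2)
    - ((n : ℝ) ^ 2 * (f r) ^ 2 + (m : ℝ) ^ 2 * (g r) ^ 2)
    - r ^ 2 * (Vpoly β₁ β₂ β' α (f r) (g r) - Vpoly β₁ β₂ β' α A B)) / 2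

lemma Phi_hasDerivAt (n m : ℕ) (β₁ β₂ β' α A B : ℝ) (f g : ℝ → ℝ) (r : ℝ) (hr : 0 < r)
    (Ff : HasDerivAt f (deriv f r) r) (Gg : HasDerivAt g (deriv g r) r)
    (Ff2 : HasDerivAt (deriv f) (deriv (deriv f) r) r)
    (Gg2 : HasDerivAt (deriv g) (deriv (deriv g) r) r)
    (ode1 : deriv (deriv f) r + deriv f r / r - ((n : ℝ) ^ 2 / r ^ 2) * f r
        = f r * (β₁ * ((f r) ^ 2 - 1) + β' * (g r) ^ 2))
    (ode2 : deriv (deriv g) r + deriv g r / r - ((m : ℝ) ^ 2 / r ^ 2) * g r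
        = g r * (β₂ * (g r) ^ 2 - α + β' * (f r) ^ 2)) :
    HasDerivAt (Phi n m β₁ β₂ β' α A B f g)
      (-(r * (Vpoly β₁ β₂ β' α (f r) (g r) - Vpoly β₁ β₂ β' α A B))) r := by
  have hr0 : r ≠ 0 := ne_of_gt hr
  have hr2 : HasDerivAt (fun s : ℝ => s ^ 2) (2 * r) r := by
    simpa using hasDerivAt_pow 2 r
  have hf'sq : HasDerivAt (fun s => (deriv f s) ^ 2) (2 * deriv f r * deriv (deriv f) r) r := by
    simpa using Ff2.fun_pow 2
  have hg'sq : HasDerivAt (fun s => (deriv g s) ^ 2) (2 * deriv g r * deriv (deriv g) r) r := by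
    simpa using Gg2.fun_pow 2
  have hfsq : HasDerivAt (fun s => (f s) ^ 2) (2 * f r * deriv f r) r := by
    simpa using Ff.fun_pow 2
  have hgsq : HasDerivAt (fun s => (g s) ^ 2) (2 * g r * deriv g r) r := by
    simpa using Gg.fun_pow 2
  have hT1 := hr2.fun_mul (hf'sq.fun_add hg'sq)
  have hT2 := (hfsq.const_mul ((n : ℝ) ^ 2)).fun_add (hgsq.const_mul ((m : ℝ) ^ 2))
  have hA1 : HasDerivAt (fun s => ((f s) ^ 2 - 1) ^ 2)
      (2 * ((f r) ^ 2 - 1) * (2 * f r * deriv f r)) r := by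
    have := (hfsq.sub_const 1).fun_pow 2
    simpa [mul_comm, mul_assoc] using this
  have hA2 : HasDerivAt (fun s => (g s) ^ 4) (4 * (g r) ^ 3 * deriv g r) r := by
    simpa using Gg.fun_pow 4
  have hA3 := (hfsq.const_mul β').fun_mul hgsq
  have hVd := (((hA1.const_mul (β₁ / 2)).fun_add (hA2.const_mul (β₂ / 2))).fun_add
      hA3).fun_sub (hgsq.const_mul α)
  have hWd := hVd.sub_const (Vpoly β₁ β₂ β' α A B)
  have hT3 := hr2.fun_mul hWd
  have hbig := ((hT1.fun_sub hT2).fun_sub hT3).div_const 2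
  refine hbig.congr_deriv ?_
  have e1 : deriv (deriv f) r = f r * (β₁ * ((f r) ^ 2 - 1) + β' * (g r) ^ 2)
      - deriv f r / r + ((n : ℝ) ^ 2 / r ^ 2) * f r := by linarith
  have e2 : deriv (deriv g) r = g r * (β₂ * (g r) ^ 2 - α + β' * (f r) ^ 2)
      - deriv g r / r + ((m : ℝ) ^ 2 / r ^ 2) * g r := by linarith
  rw [e1, e2]
  simp only [Vpoly]
  field_simp
  ring

lemma abs_quad_comb {u v P₁ P₂ X C₁ C₂ C₃ : ℝ}
    (h1 : |P₁| ≤ C₁) (h2 : |P₂| ≤ C₂) (h3 : |X| ≤ C₃) :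
    |u ^ 2 * P₁ + v ^ 2 * P₂ + u * v * X| ≤ (C₁ + C₂ + C₃) * (u ^ 2 + v ^ 2) := by
  have t1 : |u ^ 2 * P₁ + v ^ 2 * P₂ + u * v * X|
      ≤ |u ^ 2 * P₁| + |v ^ 2 * P₂| + |u * v * X| := by
    calc |u ^ 2 * P₁ + v ^ 2 * P₂ + u * v * X|
        ≤ |u ^ 2 * P₁ + v ^ 2 * P₂| + |u * v * X| := abs_add_le _ _
      _ ≤ |u ^ 2 * P₁| + |v ^ 2 * P₂| + |u * v * X| := by
          linarith [abs_add_le (u ^ 2 * P₁) (v ^ 2 * P₂)]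
  have t2 : |u ^ 2 * P₁| ≤ u ^ 2 * C₁ := by
    rw [abs_mul, abs_pow, sq_abs]
    exact mul_le_mul_of_nonneg_left h1 (sq_nonneg u)
  have t3 : |v ^ 2 * P₂| ≤ v ^ 2 * C₂ := by
    rw [abs_mul, abs_pow, sq_abs]
    exact mul_le_mul_of_nonneg_left h2 (sq_nonneg v)
  have huv : |u * v| ≤ u ^ 2 + v ^ 2 := by
    rw [abs_mul]
    nlinarith [sq_nonneg (|u| - |v|), sq_abs u, sq_abs v, abs_nonneg u, abs_nonneg v]
  have hC3 : 0 ≤ C₃ := le_trans (abs_nonneg X) h3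
  have hC1 : 0 ≤ C₁ := le_trans (abs_nonneg P₁) h1
  have hC2 : 0 ≤ C₂ := le_trans (abs_nonneg P₂) h2
  have t4 : |u * v * X| ≤ (u ^ 2 + v ^ 2) * C₃ := by
    rw [abs_mul]
    exact mul_le_mul huv h3 (abs_nonneg _) (by nlinarith [sq_nonneg u, sq_nonneg v])
  nlinarith [mul_nonneg (sq_nonneg v) hC1, mul_nonneg (sq_nonneg u) hC2]

lemma Vpoly_quad_bound (β₁ β₂ β' α A B : ℝ)
    (hc : A * (β₁ * (A ^ 2 - 1) + β' * B ^ 2) = 0)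
    (hd : B * (β₂ * B ^ 2 - α + β' * A ^ 2) = 0) :
    ∃ K : ℝ, 0 ≤ K ∧ ∀ u v : ℝ, |u| ≤ 1 → |v| ≤ 1 →
      |Vpoly β₁ β₂ β' α (A + u) (B + v) - Vpoly β₁ β₂ β' α A B| ≤ K * (u ^ 2 + v ^ 2) := by
  set C₁ := |β₁ * (A ^ 2 - 1) + β' * B ^ 2| + |β₁| / 2 * (2 * |A| + 1) ^ 2 with hC₁
  set C₂ := |β₂ * B ^ 2 - α + β' * A ^ 2| + |β₂| / 2 * (2 * |B| + 1) ^ 2 with hC₂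
  set C₃ := |β'| * ((2 * |A| + 1) * (2 * |B| + 1)) with hC₃
  refine ⟨C₁ + C₂ + C₃, by positivity, fun u v hu hv => ?_⟩
  have hid : Vpoly β₁ β₂ β' α (A + u) (B + v) - Vpoly β₁ β₂ β' α A B
      = u ^ 2 * (β₁ * (A ^ 2 - 1) + β' * B ^ 2 + β₁ / 2 * (2 * A + u) ^ 2)
        + v ^ 2 * (β₂ * B ^ 2 - α + β' * A ^ 2 + β₂ / 2 * (2 * B + v) ^ 2)
        + u * v * (β' * ((2 * A + u) * (2 * B + v))) := by
    simp only [Vpoly]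
    linear_combination (2 : ℝ) * u * hc + (2 : ℝ) * v * hd
  have hP₁ : |β₁ * (A ^ 2 - 1) + β' * B ^ 2 + β₁ / 2 * (2 * A + u) ^ 2| ≤ C₁ := by
    refine (abs_add_le _ _).trans ?_
    have h1 : |β₁ / 2 * (2 * A + u) ^ 2| ≤ |β₁| / 2 * (2 * |A| + 1) ^ 2 := by
      rw [abs_mul, abs_div, abs_two]
      have h2 : |(2 * A + u) ^ 2| ≤ (2 * |A| + 1) ^ 2 := by
        rw [abs_pow]
        have : |2 * A + u| ≤ 2 * |A| + 1 := by
          calc |2 * A + u| ≤ |2 * A| + |u| := abs_add_le _ _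
            _ ≤ 2 * |A| + 1 := by rw [abs_mul, abs_two]; linarith
        exact pow_le_pow_left₀ (abs_nonneg _) this 2
      exact mul_le_mul_of_nonneg_left h2 (by positivity)
    simp only [hC₁]; linarith
  have hP₂ : |β₂ * B ^ 2 - α + β' * A ^ 2 + β₂ / 2 * (2 * B + v) ^ 2| ≤ C₂ := by
    refine (abs_add_le _ _).trans ?_
    have h1 : |β₂ / 2 * (2 * B + v) ^ 2| ≤ |β₂| / 2 * (2 * |B| + 1) ^ 2 := by
      rw [abs_mul, abs_div, abs_two]
      have h2 : |(2 * B + v) ^ 2| ≤ (2 * |B| + 1) ^ 2 := by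
        rw [abs_pow]
        have : |2 * B + v| ≤ 2 * |B| + 1 := by
          calc |2 * B + v| ≤ |2 * B| + |v| := abs_add_le _ _
            _ ≤ 2 * |B| + 1 := by rw [abs_mul, abs_two]; linarith
        exact pow_le_pow_left₀ (abs_nonneg _) this 2
      exact mul_le_mul_of_nonneg_left h2 (by positivity)
    simp only [hC₂]; linarith
  have hP₃ : |β' * ((2 * A + u) * (2 * B + v))| ≤ C₃ := by
    rw [abs_mul, abs_mul]
    have h1 : |2 * A + u| ≤ 2 * |A| + 1 := by
      calc |2 * A + u| ≤ |2 * A| + |u| := abs_add_le _ _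
        _ ≤ 2 * |A| + 1 := by rw [abs_mul, abs_two]; linarith
    have h2 : |2 * B + v| ≤ 2 * |B| + 1 := by
      calc |2 * B + v| ≤ |2 * B| + |v| := abs_add_le _ _
        _ ≤ 2 * |B| + 1 := by rw [abs_mul, abs_two]; linarith
    have : |2 * A + u| * |2 * B + v| ≤ (2 * |A| + 1) * (2 * |B| + 1) :=
      mul_le_mul h1 h2 (abs_nonneg _) (by positivity)
    simp only [hC₃]
    exact mul_le_mul_of_nonneg_left this (abs_nonneg β')
  rw [hid]
  exact abs_quad_comb hP₁ hP₂ hP₃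

/-- Pohozaev-type quantization identity (Theorem 2.2):
∫₀^∞ r (V(f,g) - V(A,B)) dr = (n²A² + m²B²)/2. -/
theorem tcgl_quantization (n m : ℕ) (β₁ β₂ β' α A B : ℝ)
    (V : ℝ → ℝ → ℝ)
    (hV : ∀ x y, V x y = β₁ / 2 * (x ^ 2 - 1) ^ 2 + β₂ / 2 * y ^ 4
        + β' * x ^ 2 * y ^ 2 - α * y ^ 2)
    (f g : ℝ → ℝ)
    (hf_smooth : ContDiffOn ℝ 2 f (Ioi 0)) (hg_smooth : ContDiffOn ℝ 2 g (Ioi 0))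
    (hf_ode : ∀ r ∈ Ioi (0:ℝ),
      deriv (deriv f) r + deriv f r / r - ((n : ℝ) ^ 2 / r ^ 2) * f r
        = f r * (β₁ * ((f r) ^ 2 - 1) + β' * (g r) ^ 2))
    (hg_ode : ∀ r ∈ Ioi (0:ℝ),
      deriv (deriv g) r + deriv g r / r - ((m : ℝ) ^ 2 / r ^ 2) * g r
        = g r * (β₂ * (g r) ^ 2 - α + β' * (f r) ^ 2))
    (hf_lim : Tendsto f atTop (nhds A)) (hg_lim : Tendsto g atTop (nhds B))
    (hf_asym : (fun r => f r - A) =O[atTop] fun r => r⁻¹ ^ 2)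
    (hg_asym : (fun r => g r - B) =O[atTop] fun r => r⁻¹ ^ 2)
    (hf'_top : Tendsto (fun r => r ^ 2 * (deriv f r) ^ 2) atTop (nhds 0))
    (hg'_top : Tendsto (fun r => r ^ 2 * (deriv g r) ^ 2) atTop (nhds 0))
    (hf0 : f 0 * (n : ℝ) = 0) (hg0 : g 0 * (m : ℝ) = 0)
    (hf'_0 : Tendsto (fun r => r * (deriv f r) ^ 2) (nhdsWithin 0 (Ioi 0)) (nhds 0))
    (hg'_0 : Tendsto (fun r => r * (deriv g r) ^ 2) (nhdsWithin 0 (Ioi 0)) (nhds 0)) :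
    ∫ r in Ioi (0:ℝ), r * (V (f r) (g r) - V A B)
      = ((n : ℝ) ^ 2 * A ^ 2 + (m : ℝ) ^ 2 * B ^ 2) / 2 := by
  have hVeq : V = Vpoly β₁ β₂ β' α := funext fun x => funext fun y => hV x y
  subst hVeq
  clear hV
  have hI : IsOpen (Ioi (0:ℝ)) := isOpen_Ioi
  -- basic differentiability
  have hfd : ∀ r ∈ Ioi (0:ℝ), HasDerivAt f (deriv f r) r := fun r hr =>
    ((hf_smooth.differentiableOn (by norm_num)).differentiableAt (hI.mem_nhds hr)).hasDerivAt
  have hgd : ∀ r ∈ Ioi (0:ℝ), HasDerivAt g (deriv g r) r := fun r hr =>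
    ((hg_smooth.differentiableOn (by norm_num)).differentiableAt (hI.mem_nhds hr)).hasDerivAt
  have hf2cd : ContDiffOn ℝ 1 (deriv f) (Ioi 0) := hf_smooth.deriv_of_isOpen hI (by norm_num)
  have hg2cd : ContDiffOn ℝ 1 (deriv g) (Ioi 0) := hg_smooth.deriv_of_isOpen hI (by norm_num)
  have hfd2 : ∀ r ∈ Ioi (0:ℝ), HasDerivAt (deriv f) (deriv (deriv f) r) r := fun r hr =>
    ((hf2cd.differentiableOn (by norm_num)).differentiableAt (hI.mem_nhds hr)).hasDerivAt
  have hgd2 : ∀ r ∈ Ioi (0:ℝ), HasDerivAt (deriv g) (deriv (deriv g) r) r := fun r hr =>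
    ((hg2cd.differentiableOn (by norm_num)).differentiableAt (hI.mem_nhds hr)).hasDerivAt
  have hfc : ContinuousOn f (Ioi 0) := hf_smooth.continuousOn
  have hgc : ContinuousOn g (Ioi 0) := hg_smooth.continuousOn
  -- reformulated ODEs
  have hodef : ∀ r ∈ Ioi (0:ℝ), deriv f r + r * deriv (deriv f) r
      = (n:ℝ)^2 * f r / r + r * (f r * (β₁ * ((f r)^2 - 1) + β' * (g r)^2)) := by
    intro r hr
    have hr' : 0 < r := hr
    have hr0 : (r:ℝ) ≠ 0 := ne_of_gt hr'
    have e := hf_ode r hr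
    have e1 : deriv (deriv f) r = f r * (β₁ * ((f r)^2 - 1) + β' * (g r)^2)
        - deriv f r / r + (n:ℝ)^2 / r^2 * f r := by linarith
    rw [e1]; field_simp; ring
  have hodeg : ∀ r ∈ Ioi (0:ℝ), deriv g r + r * deriv (deriv g) r
      = (m:ℝ)^2 * g r / r + r * (g r * (β₂ * (g r)^2 - α + β' * (f r)^2)) := by
    intro r hr
    have hr' : 0 < r := hr
    have hr0 : (r:ℝ) ≠ 0 := ne_of_gt hr'
    have e := hg_ode r hr
    have e1 : deriv (deriv g) r = g r * (β₂ * (g r)^2 - α + β' * (f r)^2)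
        - deriv g r / r + (m:ℝ)^2 / r^2 * g r := by linarith
    rw [e1]; field_simp; ring
  -- criticality of (A, B)
  have hψf_top : Tendsto (fun r => f r * (β₁ * ((f r)^2 - 1) + β' * (g r)^2)) atTop
      (nhds (A * (β₁ * (A^2 - 1) + β' * B^2))) :=
    hf_lim.mul ((((hf_lim.pow 2).sub_const 1).const_mul β₁).add ((hg_lim.pow 2).const_mul β'))
  have hψg_top : Tendsto (fun r => g r * (β₂ * (g r)^2 - α + β' * (f r)^2)) atTop
      (nhds (B * (β₂ * B^2 - α + β' * A^2))) :=
    hg_lim.mul ((((hg_lim.pow 2).const_mul β₂).sub_const α).add ((hf_lim.pow 2).const_mul β'))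
  have hcA : A * (β₁ * (A^2 - 1) + β' * B^2) = 0 :=
    forced_crit_at_top (k := (n:ℝ)^2) (by positivity) hfd2 hodef hf_lim hψf_top hf'_top
  have hdB : B * (β₂ * B^2 - α + β' * A^2) = 0 :=
    forced_crit_at_top (k := (m:ℝ)^2) (by positivity) hgd2 hodeg hg_lim hψg_top hg'_top
  -- limits at the origin
  obtain ⟨L, hLf⟩ := lim_at_zero hfd hf'_0
  obtain ⟨M, hMg⟩ := lim_at_zero hgd hg'_0
  have hψf_0 : Tendsto (fun r => f r * (β₁ * ((f r)^2 - 1) + β' * (g r)^2))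
      (nhdsWithin 0 (Ioi 0)) (nhds (L * (β₁ * (L^2 - 1) + β' * M^2))) :=
    hLf.mul ((((hLf.pow 2).sub_const 1).const_mul β₁).add ((hMg.pow 2).const_mul β'))
  have hψg_0 : Tendsto (fun r => g r * (β₂ * (g r)^2 - α + β' * (f r)^2))
      (nhdsWithin 0 (Ioi 0)) (nhds (M * (β₂ * M^2 - α + β' * L^2))) :=
    hMg.mul ((((hMg.pow 2).const_mul β₂).sub_const α).add ((hLf.pow 2).const_mul β'))
  have hLn : (n:ℝ)^2 * L^2 = 0 := by
    rcases Nat.eq_zero_or_pos n with h | h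
    · simp [h]
    · have hn : (0:ℝ) < (n:ℝ) := by exact_mod_cast h
      have hL0 : L = 0 :=
        forced_zero_at_zero (k := (n:ℝ)^2) (by positivity) hfd2 hodef hLf hψf_0 hf'_0
      simp [hL0]
  have hMm : (m:ℝ)^2 * M^2 = 0 := by
    rcases Nat.eq_zero_or_pos m with h | h
    · simp [h]
    · have hm : (0:ℝ) < (m:ℝ) := by exact_mod_cast h
      have hM0 : M = 0 :=
        forced_zero_at_zero (k := (m:ℝ)^2) (by positivity) hgd2 hodeg hMg hψg_0 hg'_0
      simp [hM0]
  -- Phi and F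
  have hPhid : ∀ r ∈ Ioi (0:ℝ), HasDerivAt (Phi n m β₁ β₂ β' α A B f g)
      (-(r * (Vpoly β₁ β₂ β' α (f r) (g r) - Vpoly β₁ β₂ β' α A B))) r := fun r hr =>
    Phi_hasDerivAt n m β₁ β₂ β' α A B f g r hr (hfd r hr) (hgd r hr) (hfd2 r hr) (hgd2 r hr)
      (hf_ode r hr) (hg_ode r hr)
  set F : ℝ → ℝ := fun r => -(Phi n m β₁ β₂ β' α A B f g r) with hFdef
  have hFd : ∀ r ∈ Ioi (0:ℝ), HasDerivAt F
      (r * (Vpoly β₁ β₂ β' α (f r) (g r) - Vpoly β₁ β₂ β' α A B)) r := by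
    intro r hr
    have := (hPhid r hr).fun_neg
    simpa [hFdef] using this
  -- continuity of the integrand
  have hWc : ContinuousOn (fun r => Vpoly β₁ β₂ β' α (f r) (g r) - Vpoly β₁ β₂ β' α A B)
      (Ioi 0) := by
    apply ContinuousOn.sub _ continuousOn_const
    show ContinuousOn (fun r => β₁ / 2 * ((f r) ^ 2 - 1) ^ 2 + β₂ / 2 * (g r) ^ 4
      + β' * (f r) ^ 2 * (g r) ^ 2 - α * (g r) ^ 2) (Ioi 0)
    exact (((continuousOn_const.mul (((hfc.pow 2).sub continuousOn_const).pow 2)).add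
      (continuousOn_const.mul (hgc.pow 4))).add
      ((continuousOn_const.mul (hfc.pow 2)).mul (hgc.pow 2))).sub
      (continuousOn_const.mul (hgc.pow 2))
  have hrWc : ContinuousOn
      (fun r => r * (Vpoly β₁ β₂ β' α (f r) (g r) - Vpoly β₁ β₂ β' α A B)) (Ioi 0) :=
    continuousOn_id.mul hWc
  -- limit of W at 0⁺
  have hW0 : Tendsto (fun r => Vpoly β₁ β₂ β' α (f r) (g r) - Vpoly β₁ β₂ β' α A B)
      (nhdsWithin 0 (Ioi 0)) (nhds (Vpoly β₁ β₂ β' α L M - Vpoly β₁ β₂ β' α A B)) := by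
    apply Tendsto.sub_const
    show Tendsto (fun r => β₁ / 2 * ((f r) ^ 2 - 1) ^ 2 + β₂ / 2 * (g r) ^ 4
      + β' * (f r) ^ 2 * (g r) ^ 2 - α * (g r) ^ 2) _ _
    exact ((((((hLf.pow 2).sub_const 1).pow 2).const_mul (β₁/2)).add
      ((hMg.pow 4).const_mul (β₂/2))).add
      (((hLf.pow 2).const_mul β').mul (hMg.pow 2))).sub ((hMg.pow 2).const_mul α)
  have htid0 : Tendsto (fun r : ℝ => r) (nhdsWithin 0 (Ioi 0)) (nhds 0) :=
    (continuous_id.tendsto 0).mono_left nhdsWithin_le_nhds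
  -- Tendsto F at 0⁺
  have hT1 : Tendsto (fun r => r^2*((deriv f r)^2 + (deriv g r)^2))
      (nhdsWithin 0 (Ioi 0)) (nhds 0) := by
    have h1 : Tendsto (fun r => r * (r * (deriv f r)^2) + r * (r * (deriv g r)^2))
        (nhdsWithin 0 (Ioi 0)) (nhds 0) := by
      have := (htid0.mul hf'_0).add (htid0.mul hg'_0)
      simpa using this
    exact h1.congr fun r => by ring
  have hT2 : Tendsto (fun r => (n:ℝ)^2*(f r)^2 + (m:ℝ)^2*(g r)^2)
      (nhdsWithin 0 (Ioi 0)) (nhds 0) := by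
    have h1 := ((hLf.pow 2).const_mul ((n:ℝ)^2)).add ((hMg.pow 2).const_mul ((m:ℝ)^2))
    rw [show (n:ℝ)^2*L^2 + (m:ℝ)^2*M^2 = 0 by rw [hLn, hMm]; ring] at h1
    exact h1
  have hT3 : Tendsto
      (fun r => r^2*(Vpoly β₁ β₂ β' α (f r) (g r) - Vpoly β₁ β₂ β' α A B))
      (nhdsWithin 0 (Ioi 0)) (nhds 0) := by
    have := (htid0.pow 2).mul hW0
    simpa using this
  have hPhi0 : Tendsto (Phi n m β₁ β₂ β' α A B f g) (nhdsWithin 0 (Ioi 0)) (nhds 0) := by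
    have H := ((hT1.sub hT2).sub hT3).div_const 2
    simp only [sub_zero, zero_div] at H
    exact H
  have hF0 : Tendsto F (nhdsWithin 0 (Ioi 0)) (nhds 0) := by
    have := hPhi0.neg
    rwa [neg_zero] at this
  -- r² W → 0 at infinity, and the tail bound
  obtain ⟨K, hKnn, hK⟩ := Vpoly_quad_bound β₁ β₂ β' α A B hcA hdB
  obtain ⟨C₁, hC₁⟩ := Asymptotics.isBigO_iff.mp hf_asym
  obtain ⟨C₂, hC₂⟩ := Asymptotics.isBigO_iff.mp hg_asym
  set K' := K * (C₁^2 + C₂^2) with hK'def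
  have hWbound : ∀ᶠ r in atTop,
      |Vpoly β₁ β₂ β' α (f r) (g r) - Vpoly β₁ β₂ β' α A B| ≤ K' * ((r^2)⁻¹)^2 := by
    have hfsmall : ∀ᶠ r in atTop, |f r - A| ≤ 1 := by
      have h : Tendsto (fun r => |f r - A|) atTop (nhds 0) := by
        have h0 := hf_lim.sub_const A
        rw [sub_self] at h0
        have h1 := (continuous_abs.tendsto 0).comp h0
        simpa [Function.comp_def] using h1
      filter_upwards [h.eventually_lt_const one_pos] with r hr using le_of_lt hr
    have hgsmall : ∀ᶠ r in atTop, |g r - B| ≤ 1 := by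
      have h : Tendsto (fun r => |g r - B|) atTop (nhds 0) := by
        have h0 := hg_lim.sub_const B
        rw [sub_self] at h0
        have h1 := (continuous_abs.tendsto 0).comp h0
        simpa [Function.comp_def] using h1
      filter_upwards [h.eventually_lt_const one_pos] with r hr using le_of_lt hr
    filter_upwards [hC₁, hC₂, hfsmall, hgsmall, eventually_gt_atTop 0] with r h1 h2 h3 h4 hr
    have e1 : (f r - A)^2 ≤ (C₁ * (r^2)⁻¹)^2 := by
      have hle : |f r - A| ≤ C₁ * (r^2)⁻¹ := by
        have h1' := h1
        rw [Real.norm_eq_abs, Real.norm_eq_abs,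
          abs_of_nonneg (by positivity : (0:ℝ) ≤ r⁻¹^2), inv_pow] at h1'
        exact h1'
      calc (f r - A)^2 = |f r - A|^2 := (sq_abs _).symm
        _ ≤ (C₁ * (r^2)⁻¹)^2 := pow_le_pow_left₀ (abs_nonneg _) hle 2
    have e2 : (g r - B)^2 ≤ (C₂ * (r^2)⁻¹)^2 := by
      have hle : |g r - B| ≤ C₂ * (r^2)⁻¹ := by
        have h2' := h2
        rw [Real.norm_eq_abs, Real.norm_eq_abs,
          abs_of_nonneg (by positivity : (0:ℝ) ≤ r⁻¹^2), inv_pow] at h2'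
        exact h2'
      calc (g r - B)^2 = |g r - B|^2 := (sq_abs _).symm
        _ ≤ (C₂ * (r^2)⁻¹)^2 := pow_le_pow_left₀ (abs_nonneg _) hle 2
    have hfr : f r = A + (f r - A) := by ring
    have hgr : g r = B + (g r - B) := by ring
    calc |Vpoly β₁ β₂ β' α (f r) (g r) - Vpoly β₁ β₂ β' α A B|
        = |Vpoly β₁ β₂ β' α (A + (f r - A)) (B + (g r - B)) - Vpoly β₁ β₂ β' α A B| := by
          rw [← hfr, ← hgr]
      _ ≤ K * ((f r - A)^2 + (g r - B)^2) := hK _ _ h3 h4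
      _ ≤ K * ((C₁ * (r^2)⁻¹)^2 + (C₂ * (r^2)⁻¹)^2) :=
          mul_le_mul_of_nonneg_left (add_le_add e1 e2) hKnn
      _ = K' * ((r^2)⁻¹)^2 := by rw [hK'def]; ring
  have hr2Wtop : Tendsto
      (fun r => r^2 * (Vpoly β₁ β₂ β' α (f r) (g r) - Vpoly β₁ β₂ β' α A B))
      atTop (nhds 0) := by
    apply squeeze_zero_norm' (a := fun r => K' * (r^2)⁻¹)
    · filter_upwards [hWbound, eventually_gt_atTop 0] with r hb hr
      have hr0 : r ≠ 0 := ne_of_gt hr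
      calc ‖r^2 * (Vpoly β₁ β₂ β' α (f r) (g r) - Vpoly β₁ β₂ β' α A B)‖
          = r^2 * |Vpoly β₁ β₂ β' α (f r) (g r) - Vpoly β₁ β₂ β' α A B| := by
            rw [norm_mul, Real.norm_eq_abs, Real.norm_eq_abs, abs_of_nonneg (sq_nonneg r)]
        _ ≤ r^2 * (K' * ((r^2)⁻¹)^2) := mul_le_mul_of_nonneg_left hb (sq_nonneg r)
        _ = K' * (r^2)⁻¹ := by field_simp
    · have h : Tendsto (fun r : ℝ => (r^2)⁻¹) atTop (nhds 0) :=
        Tendsto.inv_tendsto_atTop (tendsto_pow_atTop (by norm_num))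
      simpa using h.const_mul K'
  -- Tendsto F at infinity
  have hT1top : Tendsto (fun r => r^2*((deriv f r)^2 + (deriv g r)^2)) atTop (nhds 0) := by
    have h := hf'_top.add hg'_top
    simp only [add_zero] at h
    exact h.congr fun r => by ring
  have hT2top : Tendsto (fun r => (n:ℝ)^2*(f r)^2 + (m:ℝ)^2*(g r)^2) atTop
      (nhds ((n:ℝ)^2*A^2 + (m:ℝ)^2*B^2)) :=
    ((hf_lim.pow 2).const_mul ((n:ℝ)^2)).add ((hg_lim.pow 2).const_mul ((m:ℝ)^2))
  have hPhitop : Tendsto (Phi n m β₁ β₂ β' α A B f g) atTop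
      (nhds ((0 - ((n:ℝ)^2*A^2 + (m:ℝ)^2*B^2) - 0)/2)) :=
    ((hT1top.sub hT2top).sub hr2Wtop).div_const 2
  have hFtop : Tendsto F atTop (nhds (((n:ℝ)^2*A^2 + (m:ℝ)^2*B^2)/2)) := by
    have h := hPhitop.neg
    rwa [show -((0 - ((n:ℝ)^2*A^2 + (m:ℝ)^2*B^2) - 0)/2)
      = ((n:ℝ)^2*A^2 + (m:ℝ)^2*B^2)/2 by ring] at h
  -- tail integrability
  obtain ⟨R₀, hR₀⟩ := hWbound.exists_forall_of_atTop
  set R₁ := max R₀ 1 with hR₁def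
  have hR₁pos : (0:ℝ) < R₁ := lt_of_lt_of_le one_pos (le_max_right _ _)
  have hR₁1 : (1:ℝ) ≤ R₁ := le_max_right _ _
  have hIntTail : IntegrableOn
      (fun r => r * (Vpoly β₁ β₂ β' α (f r) (g r) - Vpoly β₁ β₂ β' α A B)) (Ioi R₁) := by
    have hsub : Ioi R₁ ⊆ Ioi (0:ℝ) := fun x hx => lt_trans hR₁pos hx
    have hmeas : MeasurableSet (Ioi R₁) := measurableSet_Ioi
    have hgint : IntegrableOn (fun x : ℝ => K' * x ^ (-3:ℝ)) (Ioi R₁) :=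
      (integrableOn_Ioi_rpow_of_lt (by norm_num) hR₁pos).const_mul K'
    apply Integrable.mono' hgint ((hrWc.mono hsub).aestronglyMeasurable hmeas)
    rw [ae_restrict_iff' hmeas]
    refine Filter.Eventually.of_forall fun x hx => ?_
    have hx1 : (1:ℝ) < x := lt_of_le_of_lt hR₁1 hx
    have hx0 : (0:ℝ) < x := lt_trans one_pos hx1
    have hb := hR₀ x (le_trans (le_max_left R₀ 1) (le_of_lt hx))
    have hrp : x ^ (-3:ℝ) = (x^(3:ℕ))⁻¹ := by
      rw [show (-3:ℝ) = -((3:ℕ):ℝ) by norm_num, Real.rpow_neg hx0.le, Real.rpow_natCast]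
    rw [hrp]
    calc ‖x * (Vpoly β₁ β₂ β' α (f x) (g x) - Vpoly β₁ β₂ β' α A B)‖
        = x * |Vpoly β₁ β₂ β' α (f x) (g x) - Vpoly β₁ β₂ β' α A B| := by
          rw [norm_mul, Real.norm_eq_abs, Real.norm_eq_abs, abs_of_pos hx0]
      _ ≤ x * (K' * ((x^2)⁻¹)^2) := mul_le_mul_of_nonneg_left hb hx0.le
      _ = K' * (x^(3:ℕ))⁻¹ := by field_simp
  have hIntMid : IntegrableOn
      (fun r => r * (Vpoly β₁ β₂ β' α (f r) (g r) - Vpoly β₁ β₂ β' α A B)) (Ioc 1 R₁) := by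
    have hsub : Icc (1:ℝ) R₁ ⊆ Ioi 0 := fun x hx => lt_of_lt_of_le one_pos hx.1
    exact ((hrWc.mono hsub).integrableOn_Icc).mono_set Ioc_subset_Icc_self
  have hIntIoi1 : IntegrableOn
      (fun r => r * (Vpoly β₁ β₂ β' α (f r) (g r) - Vpoly β₁ β₂ β' α A B)) (Ioi 1) := by
    rw [← Ioc_union_Ioi_eq_Ioi hR₁1]
    exact hIntMid.union hIntTail
  -- integrability near zero
  have hrW0 : Tendsto
      (fun r => r * (Vpoly β₁ β₂ β' α (f r) (g r) - Vpoly β₁ β₂ β' α A B))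
      (nhdsWithin 0 (Ioi 0)) (nhds 0) := by
    have := htid0.mul hW0
    simpa using this
  have hev0 : ∀ᶠ r in nhdsWithin (0:ℝ) (Ioi 0),
      |r * (Vpoly β₁ β₂ β' α (f r) (g r) - Vpoly β₁ β₂ β' α A B)| < 1 := by
    have habs := (continuous_abs.tendsto 0).comp hrW0
    simp only [abs_zero] at habs
    exact habs.eventually_lt_const one_pos
  obtain ⟨δ, hδpos, hδsub⟩ := mem_nhdsGT_iff_exists_Ioo_subset.1 hev0
  have hδ0 : (0:ℝ) < δ := hδpos
  set a := min δ 1 / 2 with hadef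
  have hapos : 0 < a := by positivity
  have ha1 : a ≤ 1 := by
    have := min_le_right δ 1
    rw [hadef]; linarith
  have haδ : a < δ := by
    have := min_le_left δ 1
    rw [hadef]; linarith
  have hInt0a : IntegrableOn
      (fun r => r * (Vpoly β₁ β₂ β' α (f r) (g r) - Vpoly β₁ β₂ β' α A B)) (Ioc 0 a) := by
    have hmeas : MeasurableSet (Ioc (0:ℝ) a) := measurableSet_Ioc
    have hsub : Ioc (0:ℝ) a ⊆ Ioi 0 := fun x hx => hx.1
    have hconst : IntegrableOn (fun _ : ℝ => (1:ℝ)) (Ioc (0:ℝ) a) :=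
      integrableOn_const measure_Ioc_lt_top.ne
    apply Integrable.mono' hconst ((hrWc.mono hsub).aestronglyMeasurable hmeas)
    rw [ae_restrict_iff' hmeas]
    refine Filter.Eventually.of_forall fun x hx => ?_
    have : x ∈ Ioo (0:ℝ) δ := ⟨hx.1, lt_of_le_of_lt hx.2 haδ⟩
    rw [Real.norm_eq_abs]
    exact le_of_lt (hδsub this)
  have hIntA1 : IntegrableOn
      (fun r => r * (Vpoly β₁ β₂ β' α (f r) (g r) - Vpoly β₁ β₂ β' α A B)) (Ioc a 1) := by
    have hsub : Icc a 1 ⊆ Ioi (0:ℝ) := fun x hx => lt_of_lt_of_le hapos hx.1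
    exact ((hrWc.mono hsub).integrableOn_Icc).mono_set Ioc_subset_Icc_self
  have hIntIoc01 : IntegrableOn
      (fun r => r * (Vpoly β₁ β₂ β' α (f r) (g r) - Vpoly β₁ β₂ β' α A B)) (Ioc 0 1) := by
    rw [← Ioc_union_Ioc_eq_Ioc (le_of_lt hapos) ha1]
    exact hInt0a.union hIntA1
  -- FTC assembly
  have hF1cont : ContinuousAt F 1 := (hFd 1 (by norm_num : (1:ℝ) ∈ Ioi 0)).continuousAt
  have key1 : ∫ r in Ioi (1:ℝ), r * (Vpoly β₁ β₂ β' α (f r) (g r) - Vpoly β₁ β₂ β' α A B)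
      = (((n:ℝ)^2*A^2 + (m:ℝ)^2*B^2)/2) - F 1 :=
    integral_Ioi_of_hasDerivAt_of_tendsto hF1cont.continuousWithinAt
      (fun x hx => hFd x (mem_Ioi.2 (lt_trans one_pos hx))) hIntIoi1 hFtop
  have key2 : ∫ r in (0:ℝ)..1, r * (Vpoly β₁ β₂ β' α (f r) (g r) - Vpoly β₁ β₂ β' α A B)
      = F 1 - 0 :=
    intervalIntegral.integral_eq_sub_of_hasDerivAt_of_tendsto one_pos
      (fun x hx => hFd x hx.1)
      (by rw [intervalIntegrable_iff_integrableOn_Ioc_of_le zero_le_one]; exact hIntIoc01)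
      hF0 hF1cont.continuousWithinAt
  have key2' : ∫ r in Ioc (0:ℝ) 1, r * (Vpoly β₁ β₂ β' α (f r) (g r) - Vpoly β₁ β₂ β' α A B)
      = F 1 := by
    rw [← intervalIntegral.integral_of_le zero_le_one, key2, sub_zero]
  rw [← Ioc_union_Ioi_eq_Ioi (zero_le_one (α := ℝ)),
    setIntegral_union (Ioc_disjoint_Ioi le_rfl) measurableSet_Ioi hIntIoc01 hIntIoi1,
    key2', key1]
  ring
end

section
/- Let n ≥ 1 and let f : [0,∞) → [0,1) be an increasing C² solution on (0,∞) of f'' + f'/r - (n²/r²)f = f[β₁(f²-1) + β'g²] with β₁, β' > 0, 0 ≤ f < 1, f' > 0, and f increasing bounded by 1. Then lim_{r→∞} f(r) = 1, provided g(r) → 0 as r → ∞. -/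
open Set Filter

set_option maxHeartbeats 1000000 in
/-- Step 4 of Lemma 3.2: an increasing solution bounded by 1 tends to 1 at infinity. -/
theorem tcgl_increasing_solution_tends_to_one (n : ℕ) (hn : 1 ≤ n) (β₁ β' : ℝ)
    (hβ₁ : 0 < β₁) (hβ' : 0 < β')
    (g : ℝ → ℝ) (hg_lim : Tendsto g atTop (nhds 0))
    (f : ℝ → ℝ) (hf_smooth : ContDiffOn ℝ 2 f (Ioi 0))
    (hf_range : ∀ r, 0 ≤ f r ∧ f r < 1)
    (hf_mono : MonotoneOn f (Ioi 0))
    (hf'_pos : ∀ r ∈ Ioi (0:ℝ), 0 < deriv f r)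
    (hf_ode : ∀ r ∈ Ioi (0:ℝ),
      deriv (deriv f) r + deriv f r / r - ((n : ℝ) ^ 2 / r ^ 2) * f r
        = f r * (β₁ * ((f r) ^ 2 - 1) + β' * (g r) ^ 2)) :
    Tendsto f atTop (nhds 1) := by
  -- second derivative exists on Ioi 0
  have hdf : ContDiffOn ℝ 1 (deriv f) (Ioi 0) :=
    hf_smooth.deriv_of_isOpen isOpen_Ioi (by norm_num)
  have hdf_diff : ∀ r ∈ Ioi (0:ℝ), DifferentiableAt ℝ (deriv f) r := fun r hr =>
    ((hdf.differentiableOn (by norm_num)) r hr).differentiableAt (isOpen_Ioi.mem_nhds hr)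
  -- f 1 > 0
  have hf1 : 0 < f 1 := by
    rcases lt_or_eq_of_le (hf_range 1).1 with h | h
    · exact h
    · exfalso
      have hzero : ∀ r ∈ Ioc (0:ℝ) 1, f r = 0 := fun r hr =>
        le_antisymm (by simpa [← h] using hf_mono hr.1 (by norm_num) hr.2) (hf_range r).1
      have hev : f =ᶠ[nhds (1/2 : ℝ)] (fun _ => 0) := by
        filter_upwards [Ioo_mem_nhds (by norm_num : (0:ℝ) < 1/2) (by norm_num : (1/2:ℝ) < 1)]
          with r hr
        exact hzero r ⟨hr.1, hr.2.le⟩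
      have : deriv f (1/2 : ℝ) = 0 := by
        rw [hev.deriv_eq]; simp
      have := hf'_pos (1/2) (by norm_num)
      linarith
  -- build the limit L
  set f₁ : ℝ → ℝ := fun r => f (max r 1) with hf₁def
  have hmax_mem : ∀ r : ℝ, max r 1 ∈ Ioi (0:ℝ) := fun r =>
    lt_of_lt_of_le one_pos (le_max_right r 1)
  have hf₁mono : Monotone f₁ := fun a b hab =>
    hf_mono (hmax_mem a) (hmax_mem b) (max_le_max hab le_rfl)
  have hf₁bdd : BddAbove (range f₁) := ⟨1, by rintro x ⟨r, rfl⟩; exact (hf_range _).2.le⟩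
  set L : ℝ := ⨆ r, f₁ r with hLdef
  have hL_lim : Tendsto f₁ atTop (nhds L) := tendsto_atTop_ciSup hf₁mono hf₁bdd
  have hf_eq : f =ᶠ[atTop] f₁ := by
    filter_upwards [eventually_ge_atTop (1:ℝ)] with r hr
    simp [hf₁def, max_eq_left hr]
  have hf_lim : Tendsto f atTop (nhds L) := hL_lim.congr' hf_eq.symm
  have hf_le_L : ∀ r, f₁ r ≤ L := fun r => le_ciSup hf₁bdd r
  have hfr_le_L : ∀ r ∈ Ioi (0:ℝ), f r ≤ L := fun r hr =>
    le_trans (hf_mono hr (hmax_mem r) (le_max_left r 1)) (hf_le_L r)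
  have hL_pos : 0 < L := lt_of_lt_of_le hf1 (by simpa [hf₁def] using hf_le_L 1)
  have hL_le : L ≤ 1 := ciSup_le fun r => (hf_range _).2.le
  rcases eq_or_lt_of_le hL_le with hL1 | hL1
  · rwa [hL1] at hf_lim
  -- now derive a contradiction from L < 1
  exfalso
  set c : ℝ := L * (β₁ * (L ^ 2 - 1)) with hcdef
  have hL2 : L ^ 2 < 1 := by nlinarith
  have hc_neg : c < 0 := mul_neg_of_pos_of_neg hL_pos (mul_neg_of_pos_of_neg hβ₁ (by linarith))
  -- eventual bound on the RHS of the ODE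
  have hT1 : Tendsto (fun r : ℝ => (n : ℝ) ^ 2 / r ^ 2) atTop (nhds 0) :=
    tendsto_const_nhds.div_atTop (tendsto_pow_atTop two_ne_zero)
  have hT2 : Tendsto (fun r : ℝ => β' * g r ^ 2) atTop (nhds 0) := by
    have := ((hg_lim.mul hg_lim).const_mul β')
    simpa [pow_two] using this
  have hE1 : ∀ᶠ r in atTop, (n : ℝ) ^ 2 / r ^ 2 ≤ -c / 8 :=
    hT1.eventually_le_const (by linarith)
  have hE2 : ∀ᶠ r in atTop, β' * g r ^ 2 ≤ -c / 8 :=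
    hT2.eventually_le_const (by linarith)
  have hE3 : ∀ᶠ r in atTop, L / 2 ≤ f r :=
    hf_lim.eventually_const_le (by linarith)
  have hRHS : ∀ᶠ r in atTop,
      (n : ℝ) ^ 2 / r ^ 2 * f r + f r * (β₁ * (f r ^ 2 - 1) + β' * g r ^ 2) ≤ c / 4 := by
    filter_upwards [hE1, hE2, hE3, eventually_ge_atTop (1:ℝ)] with r h1 h2 h3 hr1
    have hr0 : r ∈ Ioi (0:ℝ) := lt_of_lt_of_le one_pos hr1
    have hfr0 : 0 ≤ f r := (hf_range r).1
    have hfrL : f r ≤ L := hfr_le_L r hr0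
    have hfr1 : f r ≤ 1 := (hf_range r).2.le
    have hg0 : 0 ≤ β' * g r ^ 2 := mul_nonneg hβ'.le (sq_nonneg _)
    have hb1 : (n : ℝ) ^ 2 / r ^ 2 * f r ≤ -c / 8 := by
      calc (n : ℝ) ^ 2 / r ^ 2 * f r ≤ (n : ℝ) ^ 2 / r ^ 2 * 1 := by
            apply mul_le_mul_of_nonneg_left hfr1
            positivity
        _ ≤ -c / 8 := by simpa using h1
    have hb2 : f r * (β₁ * (f r ^ 2 - 1)) ≤ c / 2 := by
      have hsq : f r * f r ≤ L * L := mul_le_mul hfrL hfrL hfr0 (hfr0.trans hfrL)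
      have h4 : β₁ * (f r ^ 2 - 1) ≤ β₁ * (L ^ 2 - 1) := by nlinarith [hβ₁.le, hsq]
      have h5 : β₁ * (L ^ 2 - 1) < 0 := mul_neg_of_pos_of_neg hβ₁ (by linarith)
      calc f r * (β₁ * (f r ^ 2 - 1)) ≤ f r * (β₁ * (L ^ 2 - 1)) :=
            mul_le_mul_of_nonneg_left h4 hfr0
        _ ≤ (L / 2) * (β₁ * (L ^ 2 - 1)) := mul_le_mul_of_nonpos_right h3 h5.le
        _ = c / 2 := by rw [hcdef]; ring
    have hb3 : f r * (β' * g r ^ 2) ≤ -c / 8 := by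
      calc f r * (β' * g r ^ 2) ≤ 1 * (β' * g r ^ 2) := mul_le_mul_of_nonneg_right hfr1 hg0
        _ ≤ -c / 8 := by simpa using h2
    have : f r * (β₁ * (f r ^ 2 - 1) + β' * g r ^ 2)
        = f r * (β₁ * (f r ^ 2 - 1)) + f r * (β' * g r ^ 2) := by ring
    rw [this]
    linarith
  obtain ⟨R, hR⟩ := (hRHS.and (eventually_ge_atTop (1:ℝ))).exists_forall_of_atTop
  set R₀ : ℝ := max R 1 with hR₀def
  have hR₀1 : (1:ℝ) ≤ R₀ := le_max_right R 1
  have hR₀pos : (0:ℝ) < R₀ := lt_of_lt_of_le one_pos hR₀1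
  -- h r := r * f' r, and φ r := h r - c/8 * r², antitone on [R₀, ∞)
  set φ : ℝ → ℝ := fun r => r * deriv f r - c / 8 * r ^ 2 with hφdef
  have hφderiv : ∀ r ∈ Ioi (0:ℝ),
      HasDerivAt φ (deriv f r + r * deriv (deriv f) r - c / 4 * r) r := by
    intro r hr
    have h1 : HasDerivAt (fun r => r * deriv f r)
        (1 * deriv f r + r * deriv (deriv f) r) r :=
      (hasDerivAt_id r).mul ((hdf_diff r hr).hasDerivAt)
    have h2 : HasDerivAt (fun r : ℝ => c / 8 * r ^ 2) (c / 8 * (2 * r ^ 1)) r :=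
      (hasDerivAt_pow 2 r).const_mul (c / 8)
    have := h1.sub h2
    exact this.congr_deriv (by ring)
  have hφ_le : ∀ r ∈ Ici R₀, ∀ s ∈ Ici R₀, r ≤ s → φ s ≤ φ r := by
    have hanti : AntitoneOn φ (Ici R₀) := by
      apply antitoneOn_of_deriv_nonpos (convex_Ici R₀)
      · intro r hr
        exact (hφderiv r (lt_of_lt_of_le hR₀pos hr)).continuousAt.continuousWithinAt
      · intro r hr
        rw [interior_Ici] at hr
        exact (hφderiv r (lt_trans hR₀pos hr)).differentiableAt.differentiableWithinAt
      · intro r hr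
        rw [interior_Ici] at hr
        have hrpos : (0:ℝ) < r := lt_trans hR₀pos hr
        rw [(hφderiv r hrpos).deriv]
        -- use the ODE
        have hode := hf_ode r hrpos
        have hkey : deriv f r + r * deriv (deriv f) r
            = r * ((n : ℝ) ^ 2 / r ^ 2 * f r
              + f r * (β₁ * (f r ^ 2 - 1) + β' * g r ^ 2)) := by
          have hrne : r ≠ 0 := ne_of_gt hrpos
          field_simp at hode ⊢
          nlinarith [hode]
        rw [hkey]
        have hrge : R ≤ r := le_trans (le_max_left R 1) (le_of_lt hr)
        have hbound := (hR r hrge).1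
        nlinarith [mul_le_mul_of_nonneg_left hbound hrpos.le]
    intro r hr s hs hrs
    exact hanti hr hs hrs
  -- the comparison function tends to -∞
  have hTB : Tendsto (fun r : ℝ => φ R₀ + c / 8 * (r ^ 2 - R₀ ^ 2)) atTop atBot := by
    have h1 : Tendsto (fun r : ℝ => r ^ 2 - R₀ ^ 2) atTop atTop :=
      tendsto_atTop_add_const_right _ _ (tendsto_pow_atTop two_ne_zero)
    have h2 : Tendsto (fun r : ℝ => c / 8 * (r ^ 2 - R₀ ^ 2)) atTop atBot :=
      (tendsto_const_mul_atBot_of_neg (by linarith)).2 h1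
    simpa using tendsto_atBot_add_const_left _ (φ R₀) h2
  obtain ⟨r, hr1, hr2⟩ :=
    ((hTB.eventually (eventually_lt_atBot (0:ℝ))).and (eventually_ge_atTop R₀)).exists
  have hrpos : (0:ℝ) < r := lt_of_lt_of_le hR₀pos hr2
  have hφr : φ r ≤ φ R₀ := hφ_le R₀ self_mem_Ici r hr2 hr2
  have hhr : 0 < r * deriv f r := mul_pos hrpos (hf'_pos r hrpos)
  have hexp : r * deriv f r - c / 8 * r ^ 2 ≤ φ R₀ := hφr
  have hfact : c * R₀ ^ 2 < 0 := mul_neg_of_neg_of_pos hc_neg (by positivity)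
  nlinarith [hexp, hfact, hhr, hr1]
end

section
/- Let m ≥ 1, C > 0, and consider the integral operator (Tg)(r) = C rᵐ + (1/(2m)) ∫₀^r (rᵐ/s^{m-1} - s^{m+1}/rᵐ) g(s) h(s) ds where h is continuous and bounded on [0,δ]. Then for δ sufficiently small, T is a contraction on the closed ball {g ∈ C[0,δ] : |g(r)| ≤ 2C rᵐ} with weighted sup norm ‖g‖ = sup_{r∈(0,δ]} |g(r)|/rᵐ, and hence has a unique fixed point g with g(r) = C rᵐ + O(r^{m+2}) as r → 0⁺. -/
open Set intervalIntegral

open MeasureTheory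

open scoped NNReal

-- kernel bound
lemma tcgl_kern_abs_le {m : ℕ} {r s : ℝ} (hs : 0 < s) (hsr : s ≤ r) :
    |s - s ^ (2 * m + 1) / r ^ (2 * m)| ≤ s := by
  have hr0 : 0 < r := lt_of_lt_of_le hs hsr
  have hq : s ^ (2 * m + 1) / r ^ (2 * m) = s * (s / r) ^ (2 * m) := by
    rw [div_pow, ← mul_div_assoc, ← pow_succ']
  rw [hq]
  have h0 : (0:ℝ) ≤ (s / r) ^ (2 * m) := by positivity
  have h1 : (s / r) ^ (2 * m) ≤ 1 :=
    pow_le_one₀ (by positivity) ((div_le_one hr0).2 hsr)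
  rw [abs_of_nonneg (by nlinarith)]
  nlinarith

noncomputable def tcglExt (δ : ℝ) (φ : BoundedContinuousFunction ↥(Ioc (0:ℝ) δ) ℝ) (s : ℝ) : ℝ :=
  if hs : s ∈ Ioc (0:ℝ) δ then φ ⟨s, hs⟩ else 0

lemma tcglExt_of_mem {δ : ℝ} (φ : BoundedContinuousFunction ↥(Ioc (0:ℝ) δ) ℝ) {s : ℝ}
    (hs : s ∈ Ioc (0:ℝ) δ) : tcglExt δ φ s = φ ⟨s, hs⟩ := dif_pos hs

lemma tcglExt_abs_le {δ : ℝ} (φ : BoundedContinuousFunction ↥(Ioc (0:ℝ) δ) ℝ) (s : ℝ) :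
    |tcglExt δ φ s| ≤ ‖φ‖ := by
  unfold tcglExt
  split
  · exact (φ.norm_coe_le_norm _)
  · simpa using norm_nonneg φ

lemma tcglExt_dist_le {δ : ℝ} (φ ψ : BoundedContinuousFunction ↥(Ioc (0:ℝ) δ) ℝ) (s : ℝ) :
    |tcglExt δ φ s - tcglExt δ ψ s| ≤ dist φ ψ := by
  unfold tcglExt
  split
  · rw [← Real.dist_eq]
    exact BoundedContinuousFunction.dist_coe_le_dist _
  · simpa using dist_nonneg

lemma tcglExt_continuousOn {δ : ℝ} (φ : BoundedContinuousFunction ↥(Ioc (0:ℝ) δ) ℝ) :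
    ContinuousOn (tcglExt δ φ) (Ioc 0 δ) := by
  rw [continuousOn_iff_continuous_restrict]
  have : (Ioc (0:ℝ) δ).domRestrict (tcglExt δ φ) = φ := by
    funext t
    simp [Set.restrict, tcglExt_of_mem φ t.2]
  rw [this]
  exact φ.continuous

noncomputable def tcglS (m : ℕ) (C : ℝ) (h u : ℝ → ℝ) (r : ℝ) : ℝ :=
  C + (1 / (2 * (m : ℝ))) * ∫ s in (0:ℝ)..r, (s - s ^ (2 * m + 1) / r ^ (2 * m)) * u s * h s

lemma tcgl_int_bound {m : ℕ} {δ M B r : ℝ} {u h : ℝ → ℝ} (hM : 0 ≤ M) (hB : 0 ≤ B)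
    (hh : ∀ s ∈ Icc (0:ℝ) δ, |h s| ≤ M) (hu : ∀ s, |u s| ≤ B) (hr : r ∈ Icc (0:ℝ) δ) :
    |∫ s in (0:ℝ)..r, (s - s ^ (2 * m + 1) / r ^ (2 * m)) * u s * h s| ≤ B * M * r ^ 2 := by
  have h0r : (0:ℝ) ≤ r := hr.1
  have key : ∀ x ∈ Set.uIoc (0:ℝ) r,
      ‖(x - x ^ (2 * m + 1) / r ^ (2 * m)) * u x * h x‖ ≤ r * (B * M) := by
    intro x hx
    rw [uIoc_of_le h0r] at hx
    have hx0 : 0 < x := hx.1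
    have hxr : x ≤ r := hx.2
    have hk : |x - x ^ (2 * m + 1) / r ^ (2 * m)| ≤ r :=
      (tcgl_kern_abs_le hx0 hxr).trans hxr
    have hhx : |h x| ≤ M := hh x ⟨hx0.le, hxr.trans hr.2⟩
    rw [Real.norm_eq_abs, abs_mul, abs_mul]
    have h1 : |x - x ^ (2 * m + 1) / r ^ (2 * m)| * |u x| ≤ r * B :=
      mul_le_mul hk (hu x) (abs_nonneg _) h0r
    calc |x - x ^ (2 * m + 1) / r ^ (2 * m)| * |u x| * |h x| ≤ (r * B) * M :=
          mul_le_mul h1 hhx (abs_nonneg _) (by positivity)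
      _ = r * (B * M) := by ring
  calc |∫ s in (0:ℝ)..r, (s - s ^ (2 * m + 1) / r ^ (2 * m)) * u s * h s|
      ≤ r * (B * M) * |r - 0| := norm_integral_le_of_norm_le_const key
    _ = B * M * r ^ 2 := by rw [sub_zero, abs_of_nonneg h0r]; ring

lemma tcgl_integrableOn {δ M B W : ℝ} {w u h : ℝ → ℝ}
    (hw : Continuous w) (hW : ∀ s ∈ Icc (0:ℝ) δ, |w s| ≤ W)
    (hu_cont : ContinuousOn u (Ioc 0 δ)) (hu_bd : ∀ s, |u s| ≤ B)
    (hh_cont : ContinuousOn h (Icc 0 δ)) (hh_bd : ∀ s ∈ Icc (0:ℝ) δ, |h s| ≤ M) :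
    IntegrableOn (fun s => w s * u s * h s) (Icc 0 δ) volume := by
  have hres : volume.restrict (Ioc (0:ℝ) δ) = volume.restrict (Icc (0:ℝ) δ) :=
    Measure.restrict_congr_set Ioc_ae_eq_Icc
  have hmu : AEStronglyMeasurable u (volume.restrict (Icc (0:ℝ) δ)) := by
    rw [← hres]; exact hu_cont.aestronglyMeasurable measurableSet_Ioc
  have hmh : AEStronglyMeasurable h (volume.restrict (Icc (0:ℝ) δ)) :=
    hh_cont.aestronglyMeasurable measurableSet_Icc
  have hmw : AEStronglyMeasurable w (volume.restrict (Icc (0:ℝ) δ)) :=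
    hw.aestronglyMeasurable.restrict
  have hB : 0 ≤ B := le_trans (abs_nonneg _) (hu_bd 0)
  refine Integrable.mono' (g := fun _ => W * B * M)
    (integrable_const _) ((hmw.mul hmu).mul hmh) ?_
  rw [ae_restrict_iff' measurableSet_Icc]
  refine ae_of_all _ fun s hs => ?_
  have hWs := hW s hs
  have hMs := hh_bd s hs
  have hW0 : 0 ≤ W := le_trans (abs_nonneg _) hWs
  have hM0 : 0 ≤ M := le_trans (abs_nonneg _) hMs
  rw [Real.norm_eq_abs, abs_mul, abs_mul]
  exact mul_le_mul (mul_le_mul hWs (hu_bd s) (abs_nonneg _) hW0) hMs (abs_nonneg _)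
    (by positivity)

lemma tcgl_intervalIntegrable {δ M B r : ℝ} {u h : ℝ → ℝ} (hδ : 0 < δ)
    (hr : r ∈ Ioc (0:ℝ) δ)
    (hu_cont : ContinuousOn u (Ioc 0 δ)) (hu_bd : ∀ s, |u s| ≤ B)
    (hh_cont : ContinuousOn h (Icc 0 δ)) (hh_bd : ∀ s ∈ Icc (0:ℝ) δ, |h s| ≤ M) :
    ∀ (m : ℕ), IntervalIntegrable
      (fun s => (s - s ^ (2 * m + 1) / r ^ (2 * m)) * u s * h s) volume 0 r := by
  intro m
  have hw : Continuous fun s : ℝ => s - s ^ (2 * m + 1) / r ^ (2 * m) :=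
    continuous_id.sub ((continuous_pow _).div_const _)
  have hW : ∀ s ∈ Icc (0:ℝ) δ, |s - s ^ (2 * m + 1) / r ^ (2 * m)| ≤
      δ + δ ^ (2 * m + 1) / r ^ (2 * m) := by
    intro s hs
    have hr0 : 0 < r := hr.1
    have h1 : |s - s ^ (2 * m + 1) / r ^ (2 * m)| ≤ |s| + |s ^ (2 * m + 1) / r ^ (2 * m)| := by
      rw [sub_eq_add_neg]
      exact (abs_add_le _ _).trans (by rw [abs_neg])
    refine h1.trans ?_
    rw [abs_of_nonneg hs.1, abs_of_nonneg (div_nonneg (pow_nonneg hs.1 _) (pow_nonneg hr0.le _))]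
    gcongr
    · exact hs.2
    · exact hs.1
    · exact hs.2
  have := tcgl_integrableOn hw hW hu_cont hu_bd hh_cont hh_bd
  have h2 : IntegrableOn (fun s => (s - s ^ (2 * m + 1) / r ^ (2 * m)) * u s * h s)
      (uIcc 0 r) volume := by
    rw [uIcc_of_le hr.1.le]
    exact this.mono_set (Icc_subset_Icc le_rfl hr.2)
  exact h2.intervalIntegrable

lemma tcglS_continuousOn {m : ℕ} {C δ M B : ℝ} {h u : ℝ → ℝ} (hδ : 0 < δ)
    (hu_cont : ContinuousOn u (Ioc 0 δ)) (hu_bd : ∀ s, |u s| ≤ B)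
    (hh_cont : ContinuousOn h (Icc 0 δ)) (hh_bd : ∀ s ∈ Icc (0:ℝ) δ, |h s| ≤ M) :
    ContinuousOn (tcglS m C h u) (Ioc 0 δ) := by
  have hF1 : IntegrableOn (fun s => s * u s * h s) (Icc 0 δ) volume :=
    tcgl_integrableOn continuous_id (fun s hs => by
      rw [abs_of_nonneg hs.1]; exact hs.2) hu_cont hu_bd hh_cont hh_bd
  have hF2 : IntegrableOn (fun s => s ^ (2 * m + 1) * u s * h s) (Icc 0 δ) volume :=
    tcgl_integrableOn (continuous_pow _) (fun s hs => by
      rw [abs_of_nonneg (pow_nonneg hs.1 _)]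
      exact pow_le_pow_left₀ hs.1 hs.2 _) hu_cont hu_bd hh_cont hh_bd
  have huIcc : Icc (0:ℝ) δ = uIcc 0 δ := (uIcc_of_le hδ.le).symm
  have hG1 : ContinuousOn (fun x => ∫ s in (0:ℝ)..x, s * u s * h s) (Icc 0 δ) := by
    rw [huIcc] at hF1 ⊢
    exact intervalIntegral.continuousOn_primitive_interval hF1
  have hG2 : ContinuousOn (fun x => ∫ s in (0:ℝ)..x, s ^ (2 * m + 1) * u s * h s)
      (Icc 0 δ) := by
    rw [huIcc] at hF2 ⊢
    exact intervalIntegral.continuousOn_primitive_interval hF2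
  have key : ∀ r ∈ Ioc (0:ℝ) δ, tcglS m C h u r =
      C + (1 / (2 * (m : ℝ))) * ((∫ s in (0:ℝ)..r, s * u s * h s) -
        (r ^ (2 * m))⁻¹ * ∫ s in (0:ℝ)..r, s ^ (2 * m + 1) * u s * h s) := by
    intro r hr
    have hI1 : IntervalIntegrable (fun s => s * u s * h s) volume 0 r := by
      apply IntegrableOn.intervalIntegrable
      rw [uIcc_of_le hr.1.le]
      exact hF1.mono_set (Icc_subset_Icc le_rfl hr.2)
    have hI2 : IntervalIntegrable (fun s => (r ^ (2*m))⁻¹ * (s ^ (2 * m + 1) * u s * h s))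
        volume 0 r := by
      apply IntervalIntegrable.const_mul
      apply IntegrableOn.intervalIntegrable
      rw [uIcc_of_le hr.1.le]
      exact hF2.mono_set (Icc_subset_Icc le_rfl hr.2)
    have hint : (∫ s in (0:ℝ)..r, (s - s ^ (2 * m + 1) / r ^ (2 * m)) * u s * h s) =
        (∫ s in (0:ℝ)..r, s * u s * h s) -
          (r ^ (2 * m))⁻¹ * ∫ s in (0:ℝ)..r, s ^ (2 * m + 1) * u s * h s := by
      rw [← intervalIntegral.integral_const_mul, ← intervalIntegral.integral_sub hI1 hI2]
      apply intervalIntegral.integral_congr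
      intro s _
      simp only
      rw [div_eq_mul_inv]
      ring
    unfold tcglS
    rw [hint]
  refine ContinuousOn.congr ?_ key
  refine continuousOn_const.add (ContinuousOn.mul continuousOn_const ?_)
  refine ContinuousOn.sub (hG1.mono Ioc_subset_Icc_self) ?_
  refine ContinuousOn.mul ?_ (hG2.mono Ioc_subset_Icc_self)
  exact ContinuousOn.inv₀ (continuousOn_pow _) fun r hr => pow_ne_zero _ (ne_of_gt hr.1)

lemma tcglS_sub {m : ℕ} {C δ M B B' r : ℝ} {h u v : ℝ → ℝ} (hδ : 0 < δ)
    (hr : r ∈ Ioc (0:ℝ) δ)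
    (hu_cont : ContinuousOn u (Ioc 0 δ)) (hu_bd : ∀ s, |u s| ≤ B)
    (hv_cont : ContinuousOn v (Ioc 0 δ)) (hv_bd : ∀ s, |v s| ≤ B')
    (hh_cont : ContinuousOn h (Icc 0 δ)) (hh_bd : ∀ s ∈ Icc (0:ℝ) δ, |h s| ≤ M) :
    tcglS m C h u r - tcglS m C h v r = (1 / (2 * (m : ℝ))) *
      ∫ s in (0:ℝ)..r, (s - s ^ (2 * m + 1) / r ^ (2 * m)) * (u s - v s) * h s := by
  have hI1 := tcgl_intervalIntegrable hδ hr hu_cont hu_bd hh_cont hh_bd m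
  have hI2 := tcgl_intervalIntegrable hδ hr hv_cont hv_bd hh_cont hh_bd m
  unfold tcglS
  have : (fun s => (s - s ^ (2 * m + 1) / r ^ (2 * m)) * (u s - v s) * h s) =
      fun s => (s - s ^ (2 * m + 1) / r ^ (2 * m)) * u s * h s -
        (s - s ^ (2 * m + 1) / r ^ (2 * m)) * v s * h s := by
    funext s; ring
  rw [this, intervalIntegral.integral_sub hI1 hI2]
  ring

-- arithmetic helper
lemma tcgl_arith {m : ℕ} {B M r δ : ℝ} (hm : 1 ≤ m) (hB : 0 ≤ B) (hM : 0 ≤ M)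
    (hr0 : 0 ≤ r) (hrδ : r ≤ δ) (hsmall : M * δ ^ 2 ≤ m) :
    (1 / (2 * (m : ℝ))) * (B * M * r ^ 2) ≤ B / 2 := by
  have hm' : (1:ℝ) ≤ (m:ℝ) := by exact_mod_cast hm
  have hr2 : r ^ 2 ≤ δ ^ 2 := by nlinarith
  have h1 : B * M * r ^ 2 ≤ B * (m:ℝ) := by
    nlinarith [mul_le_mul_of_nonneg_left hr2 (mul_nonneg hB hM), mul_le_mul_of_nonneg_left hsmall hB]
  calc (1 / (2 * (m : ℝ))) * (B * M * r ^ 2) ≤ (1 / (2 * (m : ℝ))) * (B * (m:ℝ)) := by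
        apply mul_le_mul_of_nonneg_left h1 (by positivity)
    _ = B / 2 := by field_simp

theorem tcgl_key (m : ℕ) (hm : 1 ≤ m) (C : ℝ) (hC : 0 < C) (δ M : ℝ) (hδ : 0 < δ)
    (hM : 0 ≤ M) (h : ℝ → ℝ) (hh_cont : ContinuousOn h (Icc 0 δ))
    (hh_bd : ∀ s ∈ Icc (0:ℝ) δ, |h s| ≤ M) (hsmall : M * δ ^ 2 ≤ m) :
    ∃ φ : BoundedContinuousFunction ↥(Ioc (0:ℝ) δ) ℝ,
      ‖φ‖ ≤ 2 * C ∧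
      (∀ r (hr : r ∈ Ioc (0:ℝ) δ), φ ⟨r, hr⟩ = tcglS m C h (tcglExt δ φ) r) ∧
      ∀ ψ : BoundedContinuousFunction ↥(Ioc (0:ℝ) δ) ℝ,
        (∀ r (hr : r ∈ Ioc (0:ℝ) δ), ψ ⟨r, hr⟩ = tcglS m C h (tcglExt δ ψ) r) → ψ = φ := by
  -- the map S
  have hcontS : ∀ φ : BoundedContinuousFunction ↥(Ioc (0:ℝ) δ) ℝ,
      Continuous fun t : ↥(Ioc (0:ℝ) δ) => tcglS m C h (tcglExt δ φ) ↑t := by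
    intro φ
    exact continuousOn_iff_continuous_restrict.1
      (tcglS_continuousOn hδ (tcglExt_continuousOn φ) (tcglExt_abs_le φ) hh_cont hh_bd)
  have hbdS : ∀ φ : BoundedContinuousFunction ↥(Ioc (0:ℝ) δ) ℝ, ∀ t : ↥(Ioc (0:ℝ) δ),
      ‖tcglS m C h (tcglExt δ φ) ↑t‖ ≤ |C| + ‖φ‖ / 2 := by
    intro φ t
    have hint := tcgl_int_bound (m := m) (B := ‖φ‖) hM (norm_nonneg φ) hh_bd (tcglExt_abs_le φ)
      (Ioc_subset_Icc_self t.2)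
    have harith := tcgl_arith hm (norm_nonneg φ) hM t.2.1.le t.2.2 hsmall
    have h2 : |(1 / (2 * (m : ℝ))) *
        ∫ s in (0:ℝ)..(t:ℝ), (s - s ^ (2 * m + 1) / (t:ℝ) ^ (2 * m)) * tcglExt δ φ s * h s|
        ≤ ‖φ‖ / 2 := by
      rw [abs_mul, abs_of_nonneg (by positivity : (0:ℝ) ≤ 1 / (2 * (m:ℝ)))]
      exact le_trans (mul_le_mul_of_nonneg_left hint (by positivity)) harith
    rw [Real.norm_eq_abs]
    unfold tcglS
    exact (abs_add_le _ _).trans (by linarith)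
  set S : BoundedContinuousFunction ↥(Ioc (0:ℝ) δ) ℝ →
      BoundedContinuousFunction ↥(Ioc (0:ℝ) δ) ℝ := fun φ =>
    BoundedContinuousFunction.ofNormedAddCommGroup _ (hcontS φ) (|C| + ‖φ‖ / 2) (hbdS φ)
    with hS
  have hSapp : ∀ φ (t : ↥(Ioc (0:ℝ) δ)), S φ t = tcglS m C h (tcglExt δ φ) ↑t :=
    fun φ t => rfl
  -- contraction
  have hcontr : ContractingWith (1/2 : ℝ≥0) S := by
    constructor
    · have h12 : ((1/2 : ℝ≥0) : ℝ) < 1 := by norm_num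
      exact_mod_cast h12
    · apply LipschitzWith.of_dist_le_mul
      intro φ ψ
      have : ((1/2 : ℝ≥0) : ℝ) = 1/2 := by norm_num
      rw [this]
      refine (BoundedContinuousFunction.dist_le (by positivity)).2 fun t => ?_
      rw [Real.dist_eq, hSapp, hSapp]
      rw [tcglS_sub hδ t.2 (tcglExt_continuousOn φ) (tcglExt_abs_le φ)
        (tcglExt_continuousOn ψ) (tcglExt_abs_le ψ) hh_cont hh_bd]
      have hint := tcgl_int_bound (m := m) (B := dist φ ψ) hM dist_nonneg hh_bd
        (tcglExt_dist_le φ ψ) (Ioc_subset_Icc_self t.2)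
      have harith := tcgl_arith hm (dist_nonneg (x := φ) (y := ψ)) hM t.2.1.le t.2.2 hsmall
      rw [abs_mul, abs_of_nonneg (by positivity : (0:ℝ) ≤ 1 / (2 * (m:ℝ)))]
      calc (1 / (2 * (m:ℝ))) * |∫ s in (0:ℝ)..(t:ℝ),
            (s - s ^ (2 * m + 1) / (t:ℝ) ^ (2 * m)) * (tcglExt δ φ s - tcglExt δ ψ s) * h s|
          ≤ (1 / (2 * (m:ℝ))) * (dist φ ψ * M * (t:ℝ) ^ 2) :=
            mul_le_mul_of_nonneg_left hint (by positivity)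
        _ ≤ dist φ ψ / 2 := harith
        _ = 1 / 2 * dist φ ψ := by ring
  haveI : Nonempty (BoundedContinuousFunction ↥(Ioc (0:ℝ) δ) ℝ) := ⟨0⟩
  set φ := hcontr.fixedPoint S with hφdef
  have hfix : S φ = φ := hcontr.fixedPoint_isFixedPt
  have heq : ∀ r (hr : r ∈ Ioc (0:ℝ) δ), φ ⟨r, hr⟩ = tcglS m C h (tcglExt δ φ) r := by
    intro r hr
    conv_lhs => rw [← hfix]
    exact hSapp φ ⟨r, hr⟩
  refine ⟨φ, ?_, heq, ?_⟩
  · -- norm bound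
    have h1 : ‖φ‖ ≤ |C| + ‖φ‖ / 2 := by
      refine (BoundedContinuousFunction.norm_le (by positivity)).2 fun t => ?_
      have := hbdS φ t
      rw [← hSapp, hfix] at this
      exact this
    rw [abs_of_pos hC] at h1
    linarith
  · intro ψ hψ
    apply hcontr.fixedPoint_unique
    show S ψ = ψ
    ext t
    rw [hSapp]
    conv_rhs => rw [show t = ⟨(t:ℝ), t.2⟩ from rfl]
    exact (hψ t t.2).symm

lemma tcgl_integrand_eqOn (m : ℕ) (hm : 1 ≤ m) {r : ℝ} (hr : 0 < r) (u G h : ℝ → ℝ)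
    (hG : ∀ s ∈ Ioc (0:ℝ) r, G s = s ^ m * u s) (hG0 : G 0 = 0) :
    EqOn (fun s => r ^ m * ((s - s ^ (2 * m + 1) / r ^ (2 * m)) * u s * h s))
      (fun s => (r ^ m / s ^ (m - 1) - s ^ (m + 1) / r ^ m) * G s * h s) (Icc 0 r) := by
  obtain ⟨k, rfl⟩ : ∃ k, m = k + 1 := ⟨m - 1, by omega⟩
  intro s hs
  simp only
  rcases eq_or_lt_of_le hs.1 with h0 | h0
  · rw [← h0]
    rw [hG0]
    simp [zero_pow]
  · have hGs := hG s ⟨h0, hs.2⟩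
    rw [hGs]
    have hrne : r ≠ 0 := hr.ne'
    have hsne : s ≠ 0 := h0.ne'
    simp only [Nat.add_sub_cancel]
    field_simp
    ring

/-- Local existence and uniqueness near r = 0 by contraction: for δ small the integral
operator Tg(r) = C rᵐ + (1/(2m))∫₀^r (rᵐ/s^{m-1} - s^{m+1}/rᵐ) g h ds has a unique fixed
point in the ball {|g(r)| ≤ 2C rᵐ}, and the fixed point satisfies g = C rᵐ + O(r^{m+2}). -/
theorem tcgl_local_existence_contraction (m : ℕ) (hm : 1 ≤ m) (C : ℝ) (hC : 0 < C)
    (δ₀ : ℝ) (hδ₀ : 0 < δ₀)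
    (h : ℝ → ℝ) (hh_cont : ContinuousOn h (Icc 0 δ₀))
    (hh_bdd : ∃ M, ∀ s ∈ Icc (0:ℝ) δ₀, |h s| ≤ M) :
    ∃ δ : ℝ, 0 < δ ∧ δ ≤ δ₀ ∧
      ∃ g : ℝ → ℝ, ContinuousOn g (Icc 0 δ) ∧
        (∀ r ∈ Icc (0:ℝ) δ, |g r| ≤ 2 * C * r ^ m) ∧
        (∀ r ∈ Icc (0:ℝ) δ,
          g r = C * r ^ m + (1 / (2 * (m : ℝ))) *
            ∫ s in (0:ℝ)..r, (r ^ m / s ^ (m - 1) - s ^ (m + 1) / r ^ m) * g s * h s) ∧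
        (∃ K : ℝ, ∀ r ∈ Icc (0:ℝ) δ, |g r - C * r ^ m| ≤ K * r ^ (m + 2)) ∧
        ∀ g₂ : ℝ → ℝ, ContinuousOn g₂ (Icc 0 δ) →
          (∀ r ∈ Icc (0:ℝ) δ, |g₂ r| ≤ 2 * C * r ^ m) →
          (∀ r ∈ Icc (0:ℝ) δ,
            g₂ r = C * r ^ m + (1 / (2 * (m : ℝ))) *
              ∫ s in (0:ℝ)..r, (r ^ m / s ^ (m - 1) - s ^ (m + 1) / r ^ m) * g₂ s * h s) →
          ∀ r ∈ Icc (0:ℝ) δ, g₂ r = g r := by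
  obtain ⟨M₀, hM₀⟩ := hh_bdd
  set M : ℝ := max M₀ 0 with hMdef
  have hM : 0 ≤ M := le_max_right _ _
  have hMbd : ∀ s ∈ Icc (0:ℝ) δ₀, |h s| ≤ M := fun s hs => (hM₀ s hs).trans (le_max_left _ _)
  have hmne : m ≠ 0 := by omega
  set δ : ℝ := min δ₀ (Real.sqrt ((m : ℝ) / (M + 1))) with hδdef
  have hmpos : (0:ℝ) < m := by exact_mod_cast Nat.pos_of_ne_zero hmne
  have hδpos : 0 < δ := lt_min hδ₀ (Real.sqrt_pos.2 (by positivity))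
  have hδδ₀ : δ ≤ δ₀ := min_le_left _ _
  have hsmall : M * δ ^ 2 ≤ m := by
    have h1 : δ ≤ Real.sqrt ((m : ℝ) / (M + 1)) := min_le_right _ _
    have hδ2 : δ ^ 2 ≤ (m : ℝ) / (M + 1) := by
      calc δ ^ 2 ≤ (Real.sqrt ((m : ℝ) / (M + 1))) ^ 2 :=
            pow_le_pow_left₀ hδpos.le h1 2
        _ = (m : ℝ) / (M + 1) := Real.sq_sqrt (by positivity)
    have hmm : ((m:ℝ) / (M + 1)) * (M + 1) = m := div_mul_cancel₀ _ (by positivity)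
    nlinarith [mul_le_mul_of_nonneg_left hδ2 hM, div_nonneg hmpos.le (by positivity : (0:ℝ) ≤ M + 1)]
  have hh_cont' : ContinuousOn h (Icc 0 δ) := hh_cont.mono (Icc_subset_Icc le_rfl hδδ₀)
  have hh_bd' : ∀ s ∈ Icc (0:ℝ) δ, |h s| ≤ M :=
    fun s hs => hMbd s ⟨hs.1, hs.2.trans hδδ₀⟩
  obtain ⟨φ, hφnorm, hφeq, hφuniq⟩ :=
    tcgl_key m hm C hC δ M hδpos hM h hh_cont' hh_bd' hsmall
  set g : ℝ → ℝ := fun r => r ^ m * tcglExt δ φ r with hgdef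
  have hg0 : g 0 = 0 := by
    simp [hgdef, zero_pow hmne]
  have hextbd : ∀ s, |tcglExt δ φ s| ≤ 2 * C := fun s => (tcglExt_abs_le φ s).trans hφnorm
  have hgbd : ∀ r ∈ Icc (0:ℝ) δ, |g r| ≤ 2 * C * r ^ m := by
    intro r hr
    rw [hgdef]
    simp only
    rw [abs_mul, abs_of_nonneg (pow_nonneg hr.1 _)]
    calc r ^ m * |tcglExt δ φ r| ≤ r ^ m * (2 * C) :=
          mul_le_mul_of_nonneg_left (hextbd r) (pow_nonneg hr.1 _)
      _ = 2 * C * r ^ m := by ring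
  -- representation on Ioc
  have hrep : ∀ r ∈ Ioc (0:ℝ) δ, g r = C * r ^ m + (1 / (2 * (m : ℝ))) *
      (r ^ m * ∫ s in (0:ℝ)..r, (s - s ^ (2 * m + 1) / r ^ (2 * m)) * tcglExt δ φ s * h s) := by
    intro r hr
    have hext : tcglExt δ φ r = φ ⟨r, hr⟩ := tcglExt_of_mem φ hr
    calc g r = r ^ m * tcglS m C h (tcglExt δ φ) r := by
          rw [hgdef]; simp only; rw [hext, hφeq r hr]
      _ = _ := by unfold tcglS; ring
  -- converted equation
  have hIconv : ∀ r ∈ Ioc (0:ℝ) δ,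
      r ^ m * (∫ s in (0:ℝ)..r, (s - s ^ (2 * m + 1) / r ^ (2 * m)) * tcglExt δ φ s * h s) =
      ∫ s in (0:ℝ)..r, (r ^ m / s ^ (m - 1) - s ^ (m + 1) / r ^ m) * g s * h s := by
    intro r hr
    rw [← intervalIntegral.integral_const_mul]
    apply intervalIntegral.integral_congr
    rw [uIcc_of_le hr.1.le]
    exact tcgl_integrand_eqOn m hm hr.1 (tcglExt δ φ) g h (fun s _ => rfl) hg0
  have hgeq : ∀ r ∈ Icc (0:ℝ) δ, g r = C * r ^ m + (1 / (2 * (m : ℝ))) *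
      ∫ s in (0:ℝ)..r, (r ^ m / s ^ (m - 1) - s ^ (m + 1) / r ^ m) * g s * h s := by
    intro r hr
    rcases eq_or_lt_of_le hr.1 with h0 | h0
    · rw [← h0]
      simp [hg0, zero_pow hmne]
    · rw [hrep r ⟨h0, hr.2⟩, hIconv r ⟨h0, hr.2⟩]
  -- continuity
  have hgcont : ContinuousOn g (Icc 0 δ) := by
    intro r hr
    rcases eq_or_lt_of_le hr.1 with h0 | h0
    · rw [← h0]
      have hb : ∀ x : ℝ, ‖g x‖ ≤ 2 * C * |x| ^ m := by
        intro x
        rw [hgdef]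
        simp only [Real.norm_eq_abs, abs_mul, abs_pow]
        calc |x| ^ m * |tcglExt δ φ x| ≤ |x| ^ m * (2 * C) :=
              mul_le_mul_of_nonneg_left (hextbd x) (pow_nonneg (abs_nonneg _) _)
          _ = 2 * C * |x| ^ m := by ring
      have htend : Filter.Tendsto (fun x : ℝ => 2 * C * |x| ^ m) (nhdsWithin 0 (Icc 0 δ)) (nhds 0) := by
        have hc : Continuous fun x : ℝ => 2 * C * |x| ^ m := by fun_prop
        have := hc.tendsto 0
        simp only [abs_zero, zero_pow hmne, mul_zero] at this
        exact this.mono_left nhdsWithin_le_nhds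
      have : Filter.Tendsto g (nhdsWithin 0 (Icc 0 δ)) (nhds 0) :=
        squeeze_zero_norm hb htend
      unfold ContinuousWithinAt
      rwa [hg0]
    · have hIocCont : ContinuousOn g (Ioc 0 δ) :=
        ((continuous_pow m).continuousOn).mul (tcglExt_continuousOn φ)
      have hmem : Ioc (0:ℝ) δ ∈ nhdsWithin r (Icc 0 δ) := by
        have h1 : Icc (0:ℝ) δ ∩ Ioi 0 ∈ nhdsWithin r (Icc 0 δ) :=
          inter_mem_nhdsWithin _ (isOpen_Ioi.mem_nhds h0)
        have h2 : Icc (0:ℝ) δ ∩ Ioi 0 = Ioc 0 δ := by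
          ext x
          simp only [mem_inter_iff, mem_Icc, mem_Ioi, mem_Ioc]
          constructor
          · rintro ⟨⟨_, hx2⟩, hx3⟩; exact ⟨hx3, hx2⟩
          · rintro ⟨hx1, hx2⟩; exact ⟨⟨hx1.le, hx2⟩, hx1⟩
        rwa [h2] at h1
      exact (hIocCont r ⟨h0, hr.2⟩).mono_of_mem_nhdsWithin hmem
  -- O(r^{m+2}) bound
  have hK : ∀ r ∈ Icc (0:ℝ) δ, |g r - C * r ^ m| ≤ ((1 / (2 * (m:ℝ))) * (2 * C * M)) * r ^ (m + 2) := by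
    intro r hr
    rcases eq_or_lt_of_le hr.1 with h0 | h0
    · rw [← h0]
      simp [hg0, zero_pow hmne]
    · have hIb := tcgl_int_bound (m := m) (B := 2 * C) hM (by positivity) hh_bd' hextbd hr
      have hrw := hrep r ⟨h0, hr.2⟩
      rw [hrw]
      have hpos : (0:ℝ) ≤ 1 / (2 * (m:ℝ)) := by positivity
      rw [add_sub_cancel_left, abs_mul, abs_mul, abs_of_nonneg hpos,
        abs_of_nonneg (pow_nonneg hr.1 m)]
      calc (1 / (2 * (m:ℝ))) * (r ^ m *
            |∫ s in (0:ℝ)..r, (s - s ^ (2 * m + 1) / r ^ (2 * m)) * tcglExt δ φ s * h s|)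
          ≤ (1 / (2 * (m:ℝ))) * (r ^ m * (2 * C * M * r ^ 2)) := by
            apply mul_le_mul_of_nonneg_left _ hpos
            exact mul_le_mul_of_nonneg_left hIb (pow_nonneg hr.1 m)
        _ = ((1 / (2 * (m:ℝ))) * (2 * C * M)) * r ^ (m + 2) := by
            rw [pow_add]; ring
  refine ⟨δ, hδpos, hδδ₀, g, hgcont, hgbd, hgeq, ⟨_, hK⟩, ?_⟩
  -- uniqueness
  intro g₂ hg₂cont hg₂bd hg₂eq
  have hg₂0 : g₂ 0 = 0 := by
    have := hg₂bd 0 ⟨le_rfl, hδpos.le⟩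
    rw [zero_pow hmne, mul_zero] at this
    exact abs_nonpos_iff.1 this
  have hψcont : Continuous fun t : ↥(Ioc (0:ℝ) δ) => g₂ ↑t / ((t : ℝ)) ^ m := by
    have h1 : Continuous fun t : ↥(Ioc (0:ℝ) δ) => g₂ ↑t :=
      (hg₂cont.mono Ioc_subset_Icc_self).restrict
    have h2 : Continuous fun t : ↥(Ioc (0:ℝ) δ) => ((t : ℝ)) ^ m :=
      (continuous_pow m).comp continuous_subtype_val
    exact h1.div h2 fun t => pow_ne_zero _ (ne_of_gt t.2.1)
  have hψbd : ∀ t : ↥(Ioc (0:ℝ) δ), ‖g₂ ↑t / ((t : ℝ)) ^ m‖ ≤ 2 * C := by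
    intro t
    have htpos : (0:ℝ) < (t : ℝ) ^ m := pow_pos t.2.1 m
    rw [Real.norm_eq_abs, abs_div, abs_of_pos htpos, div_le_iff₀ htpos]
    exact hg₂bd t (Ioc_subset_Icc_self t.2)
  set ψ : BoundedContinuousFunction ↥(Ioc (0:ℝ) δ) ℝ :=
    BoundedContinuousFunction.ofNormedAddCommGroup _ hψcont (2 * C) hψbd with hψdef
  have hψapp : ∀ t : ↥(Ioc (0:ℝ) δ), ψ t = g₂ ↑t / ((t : ℝ)) ^ m := fun t => rfl
  have hψfix : ∀ r (hr : r ∈ Ioc (0:ℝ) δ), ψ ⟨r, hr⟩ = tcglS m C h (tcglExt δ ψ) r := by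
    intro r hr
    rw [hψapp]
    simp only
    rw [div_eq_iff (pow_ne_zero m hr.1.ne')]
    have hG : ∀ s ∈ Ioc (0:ℝ) r, g₂ s = s ^ m * tcglExt δ ψ s := by
      intro s hs
      have hsδ : s ∈ Ioc (0:ℝ) δ := ⟨hs.1, hs.2.trans hr.2⟩
      rw [tcglExt_of_mem ψ hsδ, hψapp]
      simp only
      rw [mul_comm, div_mul_cancel₀ _ (pow_ne_zero m hs.1.ne')]
    have hIconv₂ : r ^ m *
        (∫ s in (0:ℝ)..r, (s - s ^ (2 * m + 1) / r ^ (2 * m)) * tcglExt δ ψ s * h s) =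
        ∫ s in (0:ℝ)..r, (r ^ m / s ^ (m - 1) - s ^ (m + 1) / r ^ m) * g₂ s * h s := by
      rw [← intervalIntegral.integral_const_mul]
      apply intervalIntegral.integral_congr
      rw [uIcc_of_le hr.1.le]
      exact tcgl_integrand_eqOn m hm hr.1 (tcglExt δ ψ) g₂ h hG hg₂0
    calc g₂ r = C * r ^ m + (1 / (2 * (m : ℝ))) *
          ∫ s in (0:ℝ)..r, (r ^ m / s ^ (m - 1) - s ^ (m + 1) / r ^ m) * g₂ s * h s :=
        hg₂eq r (Ioc_subset_Icc_self hr)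
      _ = C * r ^ m + (1 / (2 * (m : ℝ))) * (r ^ m *
          ∫ s in (0:ℝ)..r, (s - s ^ (2 * m + 1) / r ^ (2 * m)) * tcglExt δ ψ s * h s) := by
        rw [hIconv₂]
      _ = tcglS m C h (tcglExt δ ψ) r * r ^ m := by unfold tcglS; ring
  have hψφ : ψ = φ := hφuniq ψ hψfix
  intro r hr
  rcases eq_or_lt_of_le hr.1 with h0 | h0
  · rw [← h0, hg₂0, hg0]
  · have hrIoc : r ∈ Ioc (0:ℝ) δ := ⟨h0, hr.2⟩
    have h1 : g₂ r = r ^ m * ψ ⟨r, hrIoc⟩ := by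
      rw [hψapp]
      simp only
      rw [mul_comm, div_mul_cancel₀ _ (pow_ne_zero m h0.ne')]
    rw [h1, hψφ, hgdef]
    simp only
    rw [tcglExt_of_mem φ hrIoc]
end
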